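/- arXiv:2511.12091 — 9 statements merged into one kernel-verified Lean document; each statement's English description precedes it below -/
import Mathlib

section
/- Let u ∈ C²[0,T) with u(0) = u₀ > 0 and u'(0) = 0 satisfy ((N−1)u'(r)/r)^{1/(N−1)} · (u''(r) + ((N−2)/r)u'(r)) = K(r)f(u(r)) for all r ∈ (0,T), where u'(r) > 0 on (0,T). Then for all r ∈ [0,T), u(r) = u₀ + ∫₀^r (t^{2−N}/(N−1)) · (∫₀^t N τ^{N−1} K(τ) f(u(τ)) dτ)^{(N−1)/N} dt. -/
open Set Filter Topology intervalIntegral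

/-- A positive C² solution of the radial ODE with u(0)=u₀, u'(0)=0 and u'>0 on (0,T)
satisfies the integral equation. -/
theorem stmt_3 (N : ℕ) (hN : 2 ≤ N) (T : ℝ) (hT0 : 0 < T) (hT1 : T ≤ 1)
    (K : ℝ → ℝ) (hKpos : ∀ τ ∈ Ico (0:ℝ) 1, 0 < K τ) (hKcont : ContinuousOn K (Ico 0 1))
    (f : ℝ → ℝ) (hfpos : ∀ s > (0:ℝ), 0 < f s) (hfmono : MonotoneOn f (Ioi 0))
    (hflip : ∀ x > (0:ℝ), ∃ C > (0:ℝ), ∃ ε > (0:ℝ),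
      LipschitzOnWith (Real.toNNReal C) f (Metric.ball x ε ∩ Ioi 0))
    (u₀ : ℝ) (hu₀ : 0 < u₀)
    (u : ℝ → ℝ) (hu : ContDiffOn ℝ 2 u (Ico 0 T))
    (hu0 : u 0 = u₀) (hu'0 : derivWithin u (Ico 0 T) 0 = 0)
    (hu'pos : ∀ r ∈ Ioo (0:ℝ) T, 0 < deriv u r)
    (hode : ∀ r ∈ Ioo (0:ℝ) T,
      ((N - 1) * deriv u r / r) ^ (((N:ℝ) - 1)⁻¹) *
        (deriv (deriv u) r + ((N:ℝ) - 2) / r * deriv u r) = K r * f (u r)) :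
    ∀ r ∈ Ico (0:ℝ) T,
      u r = u₀ + ∫ t in (0:ℝ)..r, t ^ ((2:ℝ) - N) / ((N:ℝ) - 1) *
        (∫ τ in (0:ℝ)..t, (N:ℝ) * τ ^ ((N:ℝ) - 1) * K τ * f (u τ)) ^ (((N:ℝ) - 1) / N) := by
  have hn2 : (2:ℝ) ≤ (N:ℝ) := by exact_mod_cast hN
  set n : ℝ := (N:ℝ) with hn
  have hn1 : (1:ℝ) < n := by linarith
  have hn1' : n - 1 ≠ 0 := by linarith
  have hn0 : (0:ℝ) < n := by linarith
  set v : ℝ → ℝ := derivWithin u (Ico 0 T) with hv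
  have hud : UniqueDiffOn ℝ (Ico (0:ℝ) T) := uniqueDiffOn_Ico 0 T
  have hvcont : ContinuousOn v (Ico 0 T) := hu.continuousOn_derivWithin hud (by norm_num)
  have hucont : ContinuousOn u (Ico 0 T) := hu.continuousOn
  have hv1 : ContDiffOn ℝ 1 v (Ico 0 T) := hu.derivWithin hud (by norm_num)
  have hveq : ∀ t ∈ Ioo (0:ℝ) T, v t = deriv u t := fun t ht =>
    derivWithin_of_mem_nhds (Ico_mem_nhds ht.1 ht.2)
  have hvpos : ∀ t ∈ Ioo (0:ℝ) T, 0 < v t := fun t ht => (hveq t ht) ▸ hu'pos t ht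
  have huderiv : ∀ t ∈ Ioo (0:ℝ) T, HasDerivAt u (v t) t := by
    intro t ht
    rw [hveq t ht]
    exact ((hu.differentiableOn (by norm_num) t ⟨ht.1.le, ht.2⟩).differentiableAt
      (Ico_mem_nhds ht.1 ht.2)).hasDerivAt
  have hvderiv : ∀ t ∈ Ioo (0:ℝ) T, HasDerivAt v (deriv (deriv u) t) t := by
    intro t ht
    have hd : DifferentiableAt ℝ v t :=
      (hv1.differentiableOn (by norm_num) t ⟨ht.1.le, ht.2⟩).differentiableAt
        (Ico_mem_nhds ht.1 ht.2)
    have heq : v =ᶠ[𝓝 t] deriv u :=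
      Filter.eventuallyEq_of_mem (isOpen_Ioo.mem_nhds ht) hveq
    have : deriv v t = deriv (deriv u) t := heq.deriv_eq
    exact this ▸ hd.hasDerivAt
  have hmono : StrictMonoOn u (Ico 0 T) :=
    strictMonoOn_of_deriv_pos (convex_Ico 0 T) hucont (by rwa [interior_Ico])
  have hupos : ∀ t ∈ Ico (0:ℝ) T, u₀ ≤ u t := by
    intro t ht
    have := hmono.monotoneOn ⟨le_refl 0, hT0⟩ ht ht.1
    rwa [hu0] at this
  have hfc : ∀ x > (0:ℝ), ContinuousAt f x := by
    intro x hx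
    obtain ⟨C, hC, ε, hε, hlip⟩ := hflip x hx
    exact hlip.continuousOn.continuousAt
      (((Metric.isOpen_ball).inter isOpen_Ioi).mem_nhds ⟨Metric.mem_ball_self hε, hx⟩)
  have hfu : ContinuousOn (fun τ => f (u τ)) (Ico 0 T) := fun τ hτ =>
    (hfc (u τ) (lt_of_lt_of_le hu₀ (hupos τ hτ))).comp_continuousWithinAt (hucont τ hτ)
  -- the rpow power functions are continuous
  have hrp2 : Continuous (fun t : ℝ => t ^ (n - 2)) :=
    continuous_iff_continuousAt.2 fun x => Real.continuousAt_rpow_const x _ (Or.inr (by linarith))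
  have hrp1 : Continuous (fun t : ℝ => t ^ (n - 1)) :=
    continuous_iff_continuousAt.2 fun x => Real.continuousAt_rpow_const x _ (Or.inr (by linarith))
  set B : ℝ → ℝ := fun t => (n - 1) * t ^ (n - 2) * v t with hB
  set p : ℝ := n / (n - 1) with hp
  set G : ℝ → ℝ := fun t => B t ^ p with hG
  set g : ℝ → ℝ := fun τ => n * τ ^ (n - 1) * K τ * f (u τ) with hg
  have hp1 : 1 ≤ p := (one_le_div (by linarith)).2 (by linarith)
  have hppos : 0 < p := lt_of_lt_of_le one_pos hp1
  have hBcont : ContinuousOn B (Ico 0 T) :=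
    ((continuous_const.mul hrp2).continuousOn).mul hvcont
  have hGcont : ContinuousOn G (Ico 0 T) :=
    hBcont.rpow_const (fun x _ => Or.inr hppos.le)
  have hv0 : v 0 = 0 := hu'0
  have hB0 : B 0 = 0 := by simp [hB, hv0]
  have hG0 : G 0 = 0 := by rw [hG]; simp only [hB0]; exact Real.zero_rpow hppos.ne'
  have hBpos : ∀ t ∈ Ioo (0:ℝ) T, 0 < B t := by
    intro t ht
    exact mul_pos (mul_pos (by linarith) (Real.rpow_pos_of_pos ht.1 _)) (hvpos t ht)
  have hgcont : ContinuousOn g (Ico 0 T) := by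
    apply ContinuousOn.mul _ hfu
    apply ContinuousOn.mul ((continuous_const.mul hrp1).continuousOn)
    exact hKcont.mono (fun x hx => ⟨hx.1, lt_of_lt_of_le hx.2 hT1⟩)
  -- derivative of G
  have hGderiv : ∀ t ∈ Ioo (0:ℝ) T, HasDerivAt G (g t) t := by
    intro t ht
    have ht0 : 0 < t := ht.1
    have hVt : 0 < v t := hvpos t ht
    have h1 : HasDerivAt (fun s : ℝ => (n - 1) * s ^ (n - 2)) ((n - 1) * ((n - 2) * t ^ (n - 2 - 1))) t :=
      (Real.hasDerivAt_rpow_const (Or.inl ht0.ne')).const_mul (n - 1)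
    have h2 : HasDerivAt B ((n - 1) * ((n - 2) * t ^ (n - 2 - 1)) * v t +
        (n - 1) * t ^ (n - 2) * deriv (deriv u) t) t := h1.mul (hvderiv t ht)
    have h3 := h2.rpow_const (p := p) (Or.inl (hBpos t ht).ne')
    convert h3 using 1
    -- algebra: show g t = B' * p * B t ^ (p - 1)
    have hode' := hode t ht
    rw [← hveq t ht] at hode'
    have hq : p - 1 = (n - 1)⁻¹ := by
      rw [hp, div_sub_one hn1', show n - (n - 1) = 1 by ring, one_div]
    have hbase : ((n - 1) * t ^ (n - 2) * v t) ^ ((n - 1)⁻¹)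
        = t * ((n - 1) * v t / t) ^ ((n - 1)⁻¹) := by
      have e1 : (n - 1) * t ^ (n - 2) * v t = t ^ (n - 1) * ((n - 1) * v t / t) := by
        rw [show n - 1 = (n - 2) + 1 by ring, Real.rpow_add_one ht0.ne']
        field_simp
      rw [e1, Real.mul_rpow (Real.rpow_nonneg ht0.le _)
        (div_nonneg (mul_nonneg (by linarith) hVt.le) ht0.le)]
      rw [← Real.rpow_mul ht0.le, mul_inv_cancel₀ hn1', Real.rpow_one]
    have e2 : t ^ (n - 2 - 1) = t ^ (n - 2) / t := Real.rpow_sub_one ht0.ne' _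
    have e3 : t ^ (n - 1) = t ^ (n - 2) * t := by
      rw [show n - 1 = (n - 2) + 1 by ring, Real.rpow_add_one ht0.ne']
    simp only [hg, hB, hq]
    simp only [hp]
    rw [hbase, e2, e3,
      show n * (t ^ (n - 2) * t) * K t * f (u t)
        = n * (t ^ (n - 2) * t) * (K t * f (u t)) by ring, ← hode']
    field_simp
    ring
  -- inner FTC
  have hI : ∀ t ∈ Ico (0:ℝ) T, (∫ τ in (0:ℝ)..t, g τ) = G t := by
    intro t ht
    rcases eq_or_lt_of_le ht.1 with h0 | h0
    · rw [← h0]; simp [hG0]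
    · have hsub : Icc (0:ℝ) t ⊆ Ico 0 T := fun x hx => ⟨hx.1, lt_of_le_of_lt hx.2 ht.2⟩
      have hint : IntervalIntegrable g MeasureTheory.volume 0 t := by
        apply ContinuousOn.intervalIntegrable
        rw [uIcc_of_le h0.le]
        exact hgcont.mono hsub
      have := integral_eq_sub_of_hasDeriv_right_of_le h0.le (hGcont.mono hsub)
        (fun x hx => (hGderiv x ⟨hx.1, lt_trans hx.2 ht.2⟩).hasDerivWithinAt) hint
      rw [this, hG0, sub_zero]
  -- the outer integrand equals v on [0,T)
  have hFeq : ∀ t ∈ Ico (0:ℝ) T,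
      t ^ ((2:ℝ) - n) / (n - 1) * (∫ τ in (0:ℝ)..t, g τ) ^ ((n - 1) / n) = v t := by
    intro t ht
    rw [hI t ht]
    rcases eq_or_lt_of_le ht.1 with h0 | h0
    · rw [← h0, hG0, hv0, Real.zero_rpow (div_pos (by linarith) hn0).ne', mul_zero]
    · have hBt : 0 < B t := hBpos t ⟨h0, ht.2⟩
      have e1 : G t ^ ((n - 1) / n) = B t := by
        rw [hG, ← Real.rpow_mul hBt.le]
        rw [show p * ((n - 1) / n) = 1 by rw [hp]; field_simp, Real.rpow_one]
      rw [e1]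
      simp only [hB]
      have e2 : t ^ ((2:ℝ) - n) * t ^ (n - 2) = 1 := by
        rw [← Real.rpow_add h0, show (2:ℝ) - n + (n - 2) = 0 by ring, Real.rpow_zero]
      have : t ^ ((2:ℝ) - n) / (n - 1) * ((n - 1) * t ^ (n - 2) * v t)
          = t ^ ((2:ℝ) - n) * t ^ (n - 2) * v t := by
        field_simp
      rw [this, e2, one_mul]
  -- final FTC
  intro r hr
  rcases eq_or_lt_of_le hr.1 with h0 | h0
  · rw [← h0]; simp [hu0]
  · have hsub : Icc (0:ℝ) r ⊆ Ico 0 T := fun x hx => ⟨hx.1, lt_of_le_of_lt hx.2 hr.2⟩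
    set F : ℝ → ℝ := fun t => t ^ ((2:ℝ) - n) / (n - 1) *
      (∫ τ in (0:ℝ)..t, g τ) ^ ((n - 1) / n) with hF
    have hFcont : ContinuousOn F (Icc 0 r) :=
      (hvcont.mono hsub).congr (fun x hx => hFeq x (hsub hx))
    have hFint : IntervalIntegrable F MeasureTheory.volume 0 r := by
      apply ContinuousOn.intervalIntegrable
      rw [uIcc_of_le h0.le]
      exact hFcont
    have hftc := integral_eq_sub_of_hasDeriv_right_of_le h0.le (hucont.mono hsub)
      (fun x hx => by
        have hx' : x ∈ Ioo (0:ℝ) T := ⟨hx.1, lt_trans hx.2 hr.2⟩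
        have := huderiv x hx'
        rw [← hFeq x ⟨hx'.1.le, hx'.2⟩] at this
        exact this.hasDerivWithinAt) hFint
    rw [hftc, hu0]
    ring
end

section
/- If u : [0,T) → (0,∞) is continuous, positive, and satisfies u(r) = u₀ + ∫₀^r (t^{2−N}/(N−1)) · (∫₀^t N τ^{N−1} K(τ) f(u(τ)) dτ)^{(N−1)/N} dt, then u is C¹ at 0 with u'(0) = 0, i.e., lim_{r→0⁺} (u(r) − u₀)/r = 0. -/
open Set Filter Topology intervalIntegral

/-- A continuous positive solution of the integral equation satisfies
lim_{r→0⁺} (u(r) − u₀)/r = 0, i.e. u'(0) = 0 from the right. -/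
theorem stmt_5 (N : ℕ) (hN : 2 ≤ N) (T : ℝ) (hT0 : 0 < T) (hT1 : T ≤ 1)
    (K : ℝ → ℝ) (hKpos : ∀ τ ∈ Ico (0:ℝ) 1, 0 < K τ) (hKcont : ContinuousOn K (Ico 0 1))
    (f : ℝ → ℝ) (hfpos : ∀ s > (0:ℝ), 0 < f s) (hfcont : ContinuousOn f (Ioi 0))
    (u₀ : ℝ) (hu₀ : 0 < u₀)
    (u : ℝ → ℝ) (hucont : ContinuousOn u (Ico 0 T)) (hupos : ∀ r ∈ Ico (0:ℝ) T, 0 < u r)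
    (hie : ∀ r ∈ Ico (0:ℝ) T,
      u r = u₀ + ∫ t in (0:ℝ)..r, t ^ ((2:ℝ) - N) / ((N:ℝ) - 1) *
        (∫ τ in (0:ℝ)..t, (N:ℝ) * τ ^ ((N:ℝ) - 1) * K τ * f (u τ)) ^ (((N:ℝ) - 1) / N)) :
    Tendsto (fun r => (u r - u₀) / r) (𝓝[>] 0) (𝓝 0) := by
  have hN1 : (1:ℝ) ≤ (N:ℝ) - 1 := by
    have : (2:ℝ) ≤ N := by exact_mod_cast hN
    linarith
  have hN1pos : (0:ℝ) < (N:ℝ) - 1 := by linarith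
  have hNpos : (0:ℝ) < N := by linarith
  set r₀ : ℝ := T / 2 with hr₀def
  have hr₀pos : 0 < r₀ := by positivity
  have hr₀T : r₀ < T := by simp [hr₀def]; linarith
  have hr₀1 : r₀ < 1 := lt_of_lt_of_le hr₀T hT1
  have hsubT : Icc (0:ℝ) r₀ ⊆ Ico 0 T := fun x hx => ⟨hx.1, lt_of_le_of_lt hx.2 hr₀T⟩
  have hsub1 : Icc (0:ℝ) r₀ ⊆ Ico 0 1 := fun x hx => ⟨hx.1, lt_of_le_of_lt hx.2 hr₀1⟩
  obtain ⟨MK, hMK⟩ := isCompact_Icc.exists_bound_of_continuousOn (hKcont.mono hsub1)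
  have hfu : ContinuousOn (fun x => f (u x)) (Icc 0 r₀) := by
    apply hfcont.comp (hucont.mono hsubT)
    intro x hx
    exact hupos x (hsubT hx)
  obtain ⟨Mf, hMf⟩ := isCompact_Icc.exists_bound_of_continuousOn hfu
  have h0mem : (0:ℝ) ∈ Icc (0:ℝ) r₀ := ⟨le_refl _, le_of_lt hr₀pos⟩
  have hMK0 : 0 ≤ MK := le_trans (norm_nonneg _) (hMK 0 h0mem)
  have hMf0 : 0 ≤ Mf := le_trans (norm_nonneg _) (hMf 0 h0mem)
  set B : ℝ := (N:ℝ) * MK * Mf with hBdef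
  have hB0 : 0 ≤ B := by positivity
  set p : ℝ := ((N:ℝ) - 1) / N with hpdef
  have hp0 : 0 ≤ p := by positivity
  set C : ℝ := B ^ p / ((N:ℝ) - 1) with hCdef
  have hC0 : 0 ≤ C := by
    apply div_nonneg _ (le_of_lt hN1pos)
    exact Real.rpow_nonneg hB0 _
  -- Main pointwise bound
  have key : ∀ r ∈ Ioc (0:ℝ) r₀, ‖(u r - u₀) / r‖ ≤ C * r := by
    intro r hr
    have hrpos : 0 < r := hr.1
    have hrIco : r ∈ Ico (0:ℝ) T := ⟨le_of_lt hrpos, lt_of_le_of_lt hr.2 hr₀T⟩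
    have hdiff : u r - u₀ = ∫ t in (0:ℝ)..r, t ^ ((2:ℝ) - N) / ((N:ℝ) - 1) *
        (∫ τ in (0:ℝ)..t, (N:ℝ) * τ ^ ((N:ℝ) - 1) * K τ * f (u τ)) ^ p := by
      rw [hie r hrIco]; ring
    -- bound the integrand on (0, r]
    have hg : ∀ t ∈ uIoc (0:ℝ) r, ‖t ^ ((2:ℝ) - N) / ((N:ℝ) - 1) *
        (∫ τ in (0:ℝ)..t, (N:ℝ) * τ ^ ((N:ℝ) - 1) * K τ * f (u τ)) ^ p‖ ≤ C * r := by
      intro t ht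
      rw [uIoc_of_le (le_of_lt hrpos)] at ht
      have htpos : 0 < t := ht.1
      have htr : t ≤ r := ht.2
      have htr₀ : t ≤ r₀ := le_trans htr hr.2
      -- bound on the inner integral
      have hinner : ‖∫ τ in (0:ℝ)..t, (N:ℝ) * τ ^ ((N:ℝ) - 1) * K τ * f (u τ)‖ ≤
          ((N:ℝ) * t ^ ((N:ℝ) - 1) * MK * Mf) * |t - 0| := by
        apply intervalIntegral.norm_integral_le_of_norm_le_const
        intro τ hτ
        rw [uIoc_of_le (le_of_lt htpos)] at hτ
        have hτ0 : 0 ≤ τ := le_of_lt hτ.1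
        have hττ : τ ≤ t := hτ.2
        have hτmem : τ ∈ Icc (0:ℝ) r₀ := ⟨hτ0, le_trans hττ htr₀⟩
        have hτrp : τ ^ ((N:ℝ) - 1) ≤ t ^ ((N:ℝ) - 1) :=
          Real.rpow_le_rpow hτ0 hττ (le_of_lt hN1pos)
        have hτrp0 : 0 ≤ τ ^ ((N:ℝ) - 1) := Real.rpow_nonneg hτ0 _
        have h1 : ‖(N:ℝ) * τ ^ ((N:ℝ) - 1) * K τ * f (u τ)‖
            = (N:ℝ) * τ ^ ((N:ℝ) - 1) * ‖K τ‖ * ‖f (u τ)‖ := by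
          rw [norm_mul, norm_mul, norm_mul]
          rw [Real.norm_natCast, Real.norm_of_nonneg hτrp0]
        rw [h1]
        have h2 : (N:ℝ) * τ ^ ((N:ℝ) - 1) * ‖K τ‖ ≤ (N:ℝ) * t ^ ((N:ℝ) - 1) * MK := by
          have h3 : (N:ℝ) * τ ^ ((N:ℝ) - 1) ≤ (N:ℝ) * t ^ ((N:ℝ) - 1) :=
            mul_le_mul_of_nonneg_left hτrp (le_of_lt hNpos)
          exact mul_le_mul h3 (hMK τ hτmem) (norm_nonneg _) (by positivity)
        apply mul_le_mul h2 (hMf τ hτmem) (norm_nonneg _)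
        positivity
      have habs : |t - 0| = t := by rw [sub_zero, abs_of_pos htpos]
      rw [habs] at hinner
      have hinner' : ‖∫ τ in (0:ℝ)..t, (N:ℝ) * τ ^ ((N:ℝ) - 1) * K τ * f (u τ)‖ ≤
          B * t ^ (N:ℝ) := by
        calc ‖∫ τ in (0:ℝ)..t, (N:ℝ) * τ ^ ((N:ℝ) - 1) * K τ * f (u τ)‖
            ≤ ((N:ℝ) * t ^ ((N:ℝ) - 1) * MK * Mf) * t := hinner
          _ = B * (t ^ ((N:ℝ) - 1) * t) := by ring
          _ = B * t ^ (N:ℝ) := by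
              congr 1
              rw [← Real.rpow_add_one (ne_of_gt htpos)]
              norm_num
      -- bound the rpow of the inner integral
      have hrpowbd : ‖(∫ τ in (0:ℝ)..t, (N:ℝ) * τ ^ ((N:ℝ) - 1) * K τ * f (u τ)) ^ p‖ ≤
          B ^ p * t ^ ((N:ℝ) - 1) := by
        calc ‖(∫ τ in (0:ℝ)..t, (N:ℝ) * τ ^ ((N:ℝ) - 1) * K τ * f (u τ)) ^ p‖
            ≤ ‖∫ τ in (0:ℝ)..t, (N:ℝ) * τ ^ ((N:ℝ) - 1) * K τ * f (u τ)‖ ^ p := by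
              rw [Real.norm_eq_abs, Real.norm_eq_abs]
              exact Real.abs_rpow_le_abs_rpow _ _
          _ ≤ (B * t ^ (N:ℝ)) ^ p := by
              apply Real.rpow_le_rpow (norm_nonneg _) hinner' hp0
          _ = B ^ p * (t ^ (N:ℝ)) ^ p := by
              rw [Real.mul_rpow hB0 (Real.rpow_nonneg (le_of_lt htpos) _)]
          _ = B ^ p * t ^ ((N:ℝ) - 1) := by
              congr 1
              rw [← Real.rpow_mul (le_of_lt htpos)]
              congr 1
              have hN0 : (N:ℝ) ≠ 0 := ne_of_gt hNpos
              rw [hpdef]; field_simp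
      have hfac0 : 0 ≤ t ^ ((2:ℝ) - N) / ((N:ℝ) - 1) := by
        apply div_nonneg (Real.rpow_nonneg (le_of_lt htpos) _) (le_of_lt hN1pos)
      calc ‖t ^ ((2:ℝ) - N) / ((N:ℝ) - 1) *
            (∫ τ in (0:ℝ)..t, (N:ℝ) * τ ^ ((N:ℝ) - 1) * K τ * f (u τ)) ^ p‖
          = t ^ ((2:ℝ) - N) / ((N:ℝ) - 1) *
            ‖(∫ τ in (0:ℝ)..t, (N:ℝ) * τ ^ ((N:ℝ) - 1) * K τ * f (u τ)) ^ p‖ := by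
            rw [norm_mul, Real.norm_of_nonneg hfac0]
        _ ≤ t ^ ((2:ℝ) - N) / ((N:ℝ) - 1) * (B ^ p * t ^ ((N:ℝ) - 1)) := by
            exact mul_le_mul_of_nonneg_left hrpowbd hfac0
        _ = C * (t ^ ((2:ℝ) - N) * t ^ ((N:ℝ) - 1)) := by rw [hCdef]; ring
        _ = C * t := by
            congr 1
            rw [← Real.rpow_add htpos]
            norm_num
        _ ≤ C * r := mul_le_mul_of_nonneg_left htr hC0
    have hbd : ‖u r - u₀‖ ≤ (C * r) * |r - 0| := by
      rw [hdiff]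
      exact intervalIntegral.norm_integral_le_of_norm_le_const hg
    rw [sub_zero, abs_of_pos hrpos] at hbd
    rw [norm_div, Real.norm_of_nonneg (le_of_lt hrpos)]
    rw [div_le_iff₀ hrpos]
    calc ‖u r - u₀‖ ≤ C * r * r := hbd
      _ = C * r * r := rfl
  -- conclude by squeezing
  have hev : ∀ᶠ r in 𝓝[>] (0:ℝ), ‖(u r - u₀) / r‖ ≤ C * r := by
    filter_upwards [Ioc_mem_nhdsGT_of_mem ⟨le_refl (0:ℝ), hr₀pos⟩] with r hr
    exact key r hr
  have hlim : Tendsto (fun r : ℝ => C * r) (𝓝[>] (0:ℝ)) (𝓝 0) := by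
    have : Tendsto (fun r : ℝ => C * r) (𝓝 (0:ℝ)) (𝓝 (C * 0)) :=
      (continuous_const.mul continuous_id).tendsto 0
    simpa using this.mono_left nhdsWithin_le_nhds
  exact squeeze_zero_norm' hev hlim
end

section
/- If u : [0,T) → (0,∞) is continuous and satisfies u(r) = u₀ + ∫₀^r (t^{2−N}/(N−1)) · (∫₀^t N τ^{N−1} K(τ) f(u(τ)) dτ)^{(N−1)/N} dt, then the second derivative of u at 0 (from the right) exists and equals (1/(N−1))·(K(0)f(u₀))^{(N−1)/N}; i.e., lim_{r→0⁺} u'(r)/r = (1/(N−1))·(K(0)f(u₀))^{(N−1)/N} where u'(r) = (r^{2−N}/(N−1))·(∫₀^r Nτ^{N−1}K(τ)f(u(τ))dτ)^{(N−1)/N}. -/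
open Set Filter Topology intervalIntegral

/-- For a continuous solution of the integral equation,
lim_{r→0⁺} u'(r)/r = (1/(N−1))·(K(0)f(u₀))^{(N−1)/N}, where
u'(r) = (r^{2−N}/(N−1))·(∫₀^r Nτ^{N−1}K(τ)f(u(τ))dτ)^{(N−1)/N}. -/
theorem stmt_6 (N : ℕ) (hN : 2 ≤ N) (T : ℝ) (hT0 : 0 < T) (hT1 : T ≤ 1)
    (K : ℝ → ℝ) (hKpos : ∀ τ ∈ Ico (0:ℝ) 1, 0 < K τ) (hKcont : ContinuousOn K (Ico 0 1))
    (f : ℝ → ℝ) (hfpos : ∀ s > (0:ℝ), 0 < f s) (hfcont : ContinuousOn f (Ioi 0))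
    (u₀ : ℝ) (hu₀ : 0 < u₀)
    (u : ℝ → ℝ) (hucont : ContinuousOn u (Ico 0 T)) (hupos : ∀ r ∈ Ico (0:ℝ) T, 0 < u r)
    (hie : ∀ r ∈ Ico (0:ℝ) T,
      u r = u₀ + ∫ t in (0:ℝ)..r, t ^ ((2:ℝ) - N) / ((N:ℝ) - 1) *
        (∫ τ in (0:ℝ)..t, (N:ℝ) * τ ^ ((N:ℝ) - 1) * K τ * f (u τ)) ^ (((N:ℝ) - 1) / N)) :
    Tendsto (fun r => (r ^ ((2:ℝ) - N) / ((N:ℝ) - 1) *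
        (∫ τ in (0:ℝ)..r, (N:ℝ) * τ ^ ((N:ℝ) - 1) * K τ * f (u τ)) ^ (((N:ℝ) - 1) / N)) / r)
      (𝓝[>] 0) (𝓝 (1 / ((N:ℝ) - 1) * (K 0 * f u₀) ^ (((N:ℝ) - 1) / N))) := by
  have hN2 : (2:ℝ) ≤ (N:ℝ) := by exact_mod_cast hN
  have hNpos : (0:ℝ) < N := by linarith
  have hN1 : (0:ℝ) < (N:ℝ) - 1 := by linarith
  set p : ℝ := ((N:ℝ) - 1) / N with hp
  have hppos : 0 < p := div_pos hN1 hNpos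
  have hu00 : u 0 = u₀ := by
    have := hie 0 ⟨le_refl 0, hT0⟩; simpa using this
  have hC : 0 < K 0 * f u₀ :=
    mul_pos (hKpos 0 ⟨le_refl 0, zero_lt_one⟩) (hfpos u₀ hu₀)
  set C : ℝ := K 0 * f u₀ with hCdef
  set m : ℝ := min T 1 with hm
  have hmpos : 0 < m := lt_min hT0 zero_lt_one
  set φ : ℝ → ℝ := fun τ => K τ * f (u τ) with hφdef
  -- continuity of φ on Ico 0 m
  have hsub1 : Ico (0:ℝ) m ⊆ Ico 0 1 := Ico_subset_Ico le_rfl (min_le_right _ _)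
  have hsubT : Ico (0:ℝ) m ⊆ Ico 0 T := Ico_subset_Ico le_rfl (min_le_left _ _)
  have hφcont : ContinuousOn φ (Ico 0 m) := by
    apply ContinuousOn.mul (hKcont.mono hsub1)
    exact hfcont.comp (hucont.mono hsubT) (fun τ hτ => hupos τ (hsubT hτ))
  have hφ0 : φ 0 = C := by rw [hφdef]; simp [hu00]; exact hCdef.symm
  have hrpowCont : Continuous fun τ : ℝ => τ ^ ((N:ℝ) - 1) := by
    rw [continuous_iff_continuousAt]
    intro x
    exact Real.continuousAt_rpow_const x _ (Or.inr (by linarith))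
  set F : ℝ → ℝ := fun τ => (N:ℝ) * τ ^ ((N:ℝ) - 1) * K τ * f (u τ) with hF
  have hFcont : ContinuousOn F (Ico 0 m) := by
    have : ContinuousOn (fun τ : ℝ => (N:ℝ) * τ ^ ((N:ℝ) - 1)) (Ico 0 m) :=
      (continuous_const.mul hrpowCont).continuousOn
    have h2 := this.mul hφcont
    exact h2.congr (fun τ _ => by simp [hF, hφdef]; ring)
  -- integral of the weight
  have hweight : ∀ r : ℝ, 0 < r → ∀ c : ℝ,
      (∫ τ in (0:ℝ)..r, (N:ℝ) * τ ^ ((N:ℝ) - 1) * c) = c * r ^ (N:ℝ) := by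
    intro r hr c
    have h1 : (∫ τ in (0:ℝ)..r, τ ^ ((N:ℝ) - 1)) = r ^ (N:ℝ) / N := by
      rw [integral_rpow (Or.inl (by linarith : (-1:ℝ) < (N:ℝ) - 1))]
      have hs : (N:ℝ) - 1 + 1 = (N:ℝ) := by ring
      rw [hs, Real.zero_rpow (ne_of_gt hNpos), sub_zero]
    have : (∫ τ in (0:ℝ)..r, (N:ℝ) * τ ^ ((N:ℝ) - 1) * c)
        = ((N:ℝ) * c) * ∫ τ in (0:ℝ)..r, τ ^ ((N:ℝ) - 1) := by
      rw [← intervalIntegral.integral_const_mul]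
      congr 1; ext τ; ring
    rw [this, h1]; field_simp
  -- Step A: average limit
  have hA : Tendsto (fun r => (∫ τ in (0:ℝ)..r, F τ) / r ^ (N:ℝ)) (𝓝[>] 0) (𝓝 C) := by
    rw [Metric.tendsto_nhdsWithin_nhds]
    intro ε hε
    have hφ0' : ContinuousWithinAt φ (Ico 0 m) 0 := hφcont 0 ⟨le_refl 0, hmpos⟩
    have := Metric.tendsto_nhdsWithin_nhds.mp hφ0' (ε/2) (half_pos hε)
    obtain ⟨δ₀, hδ₀, hδ⟩ := this
    refine ⟨min δ₀ m, lt_min hδ₀ hmpos, ?_⟩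
    intro r hr hrd
    have hr0 : 0 < r := hr
    rw [Real.dist_eq, sub_zero, abs_of_pos hr0] at hrd
    have hrδ₀ : r < δ₀ := lt_of_lt_of_le hrd (min_le_left _ _)
    have hrm : r < m := lt_of_lt_of_le hrd (min_le_right _ _)
    have hkey : ∀ τ ∈ Icc (0:ℝ) r, |φ τ - C| ≤ ε/2 := by
      intro τ hτ
      have hτm : τ ∈ Ico (0:ℝ) m := ⟨hτ.1, lt_of_le_of_lt hτ.2 hrm⟩
      have hd : dist τ 0 < δ₀ := by
        rw [Real.dist_eq, sub_zero, abs_of_nonneg hτ.1]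
        exact lt_of_le_of_lt hτ.2 hrδ₀
      have := hδ hτm hd
      rw [hφ0, Real.dist_eq] at this
      exact le_of_lt this
    have hIccsub : Icc (0:ℝ) r ⊆ Ico 0 m := fun x hx => ⟨hx.1, lt_of_le_of_lt hx.2 hrm⟩
    have hFint : IntervalIntegrable F MeasureTheory.volume 0 r := by
      apply (hFcont.mono ?_).intervalIntegrable
      rw [uIcc_of_le hr0.le]; exact hIccsub
    have hGint : IntervalIntegrable (fun τ => (N:ℝ) * τ ^ ((N:ℝ) - 1) * C)
        MeasureTheory.volume 0 r :=
      ((continuous_const.mul hrpowCont).mul continuous_const).intervalIntegrable 0 r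
    have hBint : IntervalIntegrable (fun τ => (N:ℝ) * τ ^ ((N:ℝ) - 1) * (ε/2))
        MeasureTheory.volume 0 r :=
      ((continuous_const.mul hrpowCont).mul continuous_const).intervalIntegrable 0 r
    have hrN : 0 < r ^ (N:ℝ) := Real.rpow_pos_of_pos hr0 _
    have hdiff : |(∫ τ in (0:ℝ)..r, F τ) - C * r ^ (N:ℝ)| ≤ ε/2 * r ^ (N:ℝ) := by
      rw [← hweight r hr0 C, ← intervalIntegral.integral_sub hFint hGint]
      calc |∫ τ in (0:ℝ)..r, (F τ - (N:ℝ) * τ ^ ((N:ℝ) - 1) * C)|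
          ≤ ∫ τ in (0:ℝ)..r, |F τ - (N:ℝ) * τ ^ ((N:ℝ) - 1) * C| :=
            intervalIntegral.abs_integral_le_integral_abs hr0.le
        _ ≤ ∫ τ in (0:ℝ)..r, (N:ℝ) * τ ^ ((N:ℝ) - 1) * (ε/2) := by
            apply intervalIntegral.integral_mono_on hr0.le ((hFint.sub hGint).abs) hBint
            intro τ hτ
            have hτ0 : 0 ≤ τ := hτ.1
            have hw : 0 ≤ (N:ℝ) * τ ^ ((N:ℝ) - 1) := by
              apply mul_nonneg hNpos.le (Real.rpow_nonneg hτ0 _)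
            have : F τ - (N:ℝ) * τ ^ ((N:ℝ) - 1) * C
                = ((N:ℝ) * τ ^ ((N:ℝ) - 1)) * (φ τ - C) := by
              simp only [hF, hφdef]; ring
            rw [this, abs_mul, abs_of_nonneg hw]
            exact mul_le_mul_of_nonneg_left (hkey τ hτ) hw
        _ = ε/2 * r ^ (N:ℝ) := hweight r hr0 (ε/2)
    rw [Real.dist_eq]
    have : (∫ τ in (0:ℝ)..r, F τ) / r ^ (N:ℝ) - C
        = ((∫ τ in (0:ℝ)..r, F τ) - C * r ^ (N:ℝ)) / r ^ (N:ℝ) := by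
      field_simp
    rw [this, abs_div, abs_of_pos hrN]
    calc |(∫ τ in (0:ℝ)..r, F τ) - C * r ^ (N:ℝ)| / r ^ (N:ℝ)
        ≤ ε/2 * r ^ (N:ℝ) / r ^ (N:ℝ) := by
          gcongr
      _ = ε/2 := by field_simp
      _ < ε := by linarith
  -- compose with rpow and const mul
  have hB : Tendsto (fun r => 1 / ((N:ℝ) - 1) * ((∫ τ in (0:ℝ)..r, F τ) / r ^ (N:ℝ)) ^ p)
      (𝓝[>] 0) (𝓝 (1 / ((N:ℝ) - 1) * C ^ p)) :=
    (hA.rpow_const (Or.inr hppos.le)).const_mul _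
  apply hB.congr'
  filter_upwards [Ioo_mem_nhdsGT_of_mem (⟨le_refl 0, hmpos⟩ : (0:ℝ) ∈ Ico 0 m)] with r hr
  have hr0 : 0 < r := hr.1
  have hrm : r < m := hr.2
  have hg : 0 ≤ ∫ τ in (0:ℝ)..r, F τ := by
    apply intervalIntegral.integral_nonneg hr0.le
    intro τ hτ
    have hτm : τ ∈ Ico (0:ℝ) m := ⟨hτ.1, lt_of_le_of_lt hτ.2 hrm⟩
    have : 0 ≤ (N:ℝ) * τ ^ ((N:ℝ) - 1) :=
      mul_nonneg hNpos.le (Real.rpow_nonneg hτ.1 _)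
    exact mul_nonneg (mul_nonneg this (hKpos τ (hsub1 hτm)).le)
      (hfpos _ (hupos τ (hsubT hτm))).le
  set g : ℝ := ∫ τ in (0:ℝ)..r, F τ with hgdef
  have hrN : 0 < r ^ (N:ℝ) := Real.rpow_pos_of_pos hr0 _
  have hNp : (N:ℝ) * p = (N:ℝ) - 1 := by
    rw [hp]; field_simp
  have hrNp : (r ^ (N:ℝ)) ^ p = r ^ ((N:ℝ) - 1) := by
    rw [← Real.rpow_mul hr0.le, hNp]
  have hrN1 : 0 < r ^ ((N:ℝ) - 1) := Real.rpow_pos_of_pos hr0 _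
  have hkey : r ^ ((2:ℝ) - N) * r ^ ((N:ℝ) - 1) = r := by
    rw [← Real.rpow_add hr0]
    norm_num
  rw [Real.div_rpow hg hrN.le, hrNp]
  have h2N : r ^ ((2:ℝ) - N) = r / r ^ ((N:ℝ) - 1) := by
    rw [eq_div_iff hrN1.ne']; exact hkey
  rw [h2N]
  field_simp
end

section
/- Comparison principle (integral form): Let K : [0,1) → (0,∞) be continuous and f : (0,∞) → (0,∞) nondecreasing. Suppose u₁, u₂ : [0,T) → (0,∞) are continuous with u₁(0) < u₂(0), and for all r ∈ [0,T): u₁(r) ≤ u₁(0) + ∫₀^r (t^{2−N}/(N−1)) (∫₀^t Nτ^{N−1} K(τ) f(u₁(τ)) dτ)^{(N−1)/N} dt and u₂(r) ≥ u₂(0) + ∫₀^r (t^{2−N}/(N−1)) (∫₀^t Nτ^{N−1} K(τ) f(u₂(τ)) dτ)^{(N−1)/N} dt. Then u₁(r) < u₂(r) for all r ∈ [0,T). -/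
open Set Filter Topology intervalIntegral

private lemma stmt7_aux (N : ℕ) (hN : 2 ≤ N) (r₀ : ℝ) (hr₀ : 0 ≤ r₀) (hr₁ : r₀ < 1)
    (K : ℝ → ℝ) (hKpos : ∀ τ ∈ Ico (0:ℝ) 1, 0 < K τ) (hKcont : ContinuousOn K (Ico 0 1))
    (f : ℝ → ℝ) (hfpos : ∀ s > (0:ℝ), 0 < f s) (hfmono : MonotoneOn f (Ioi 0))
    (u : ℝ → ℝ) (hucont : ContinuousOn u (Icc 0 r₀))
    (hupos : ∀ τ ∈ Icc (0:ℝ) r₀, 0 < u τ) :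
    MeasureTheory.IntegrableOn
        (fun τ => (N:ℝ) * τ ^ ((N:ℝ) - 1) * K τ * f (u τ)) (Icc 0 r₀) ∧
    IntervalIntegrable (fun t => t ^ ((2:ℝ) - N) / ((N:ℝ) - 1) *
        (∫ τ in (0:ℝ)..t, (N:ℝ) * τ ^ ((N:ℝ) - 1) * K τ * f (u τ)) ^ (((N:ℝ) - 1) / N))
      MeasureTheory.volume 0 r₀ := by
  have hNR : (2:ℝ) ≤ (N:ℝ) := by exact_mod_cast hN
  have hN1 : (0:ℝ) < (N:ℝ) - 1 := by linarith
  have hNpos : (0:ℝ) < (N:ℝ) := by linarith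
  set h : ℝ → ℝ := fun τ => (N:ℝ) * τ ^ ((N:ℝ) - 1) * K τ * f (u τ) with hh
  have hIsub : Icc (0:ℝ) r₀ ⊆ Ico 0 1 := fun x hx => ⟨hx.1, lt_of_le_of_lt hx.2 hr₁⟩
  have hne : (Icc (0:ℝ) r₀).Nonempty := ⟨0, le_rfl, hr₀⟩
  obtain ⟨a, haI, ha⟩ := isCompact_Icc.exists_isMinOn hne hucont
  obtain ⟨b, hbI, hb⟩ := isCompact_Icc.exists_isMaxOn hne hucont
  obtain ⟨k, hkI, hk⟩ := isCompact_Icc.exists_isMaxOn hne (hKcont.mono hIsub)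
  have hm : 0 < u a := hupos a haI
  have hM : 0 < u b := hupos b hbI
  have hKk : 0 < K k := hKpos k (hIsub hkI)
  have hfM : 0 < f (u b) := hfpos _ hM
  -- measurability of h on Icc 0 r₀
  have hFmono : Monotone (fun s => f (max s (u a))) := fun x y hxy =>
    hfmono (lt_of_lt_of_le hm (le_max_right _ _)) (lt_of_lt_of_le hm (le_max_right _ _))
      (max_le_max hxy le_rfl)
  have hASM : MeasureTheory.AEStronglyMeasurable h
      (MeasureTheory.volume.restrict (Icc 0 r₀)) := by
    have h1 : ContinuousOn (fun τ : ℝ => (N:ℝ) * τ ^ ((N:ℝ) - 1) * K τ) (Icc 0 r₀) :=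
      (continuousOn_const.mul (continuousOn_id.rpow_const fun x hx => Or.inr (by linarith))).mul
        (hKcont.mono hIsub)
    have h2 : MeasureTheory.AEStronglyMeasurable (fun τ => f (u τ))
        (MeasureTheory.volume.restrict (Icc 0 r₀)) := by
      have hum : AEMeasurable u (MeasureTheory.volume.restrict (Icc 0 r₀)) :=
        hucont.aemeasurable measurableSet_Icc
      have h3 := (hFmono.measurable.comp_aemeasurable hum).aestronglyMeasurable
      refine h3.congr ?_
      filter_upwards [MeasureTheory.ae_restrict_mem measurableSet_Icc] with τ hτ
      have hmle : u a ≤ u τ := ha hτ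
      simp [sup_eq_left.2 hmle]
    exact (h1.aestronglyMeasurable measurableSet_Icc).mul h2
  have hbdd : ∀ τ ∈ Icc (0:ℝ) r₀, 0 ≤ h τ ∧ h τ ≤ (N:ℝ) * K k * f (u b) := by
    intro τ hτ
    have hτ0 : 0 ≤ τ := hτ.1
    have hτ1 : τ ≤ 1 := le_of_lt (lt_of_le_of_lt hτ.2 hr₁)
    have hrp : (0:ℝ) ≤ τ ^ ((N:ℝ) - 1) := Real.rpow_nonneg hτ0 _
    have hrp1 : τ ^ ((N:ℝ) - 1) ≤ 1 := Real.rpow_le_one hτ0 hτ1 (by linarith)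
    have hKτ : 0 < K τ := hKpos τ (hIsub hτ)
    have hfτ : 0 < f (u τ) := hfpos _ (hupos τ hτ)
    constructor
    · positivity
    · calc h τ ≤ (N:ℝ) * 1 * K k * f (u b) := by
            apply mul_le_mul
            · apply mul_le_mul
              · exact mul_le_mul_of_nonneg_left hrp1 (by positivity)
              · exact hk hτ
              · exact le_of_lt hKτ
              · positivity
            · exact hfmono (hupos τ hτ) hM (hb hτ)
            · exact le_of_lt hfτ
            · positivity
        _ = (N:ℝ) * K k * f (u b) := by ring
  have hIntOn : MeasureTheory.IntegrableOn h (Icc 0 r₀) := by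
    refine ⟨hASM, MeasureTheory.HasFiniteIntegral.restrict_of_bounded
      (C := (N:ℝ) * K k * f (u b)) measure_Icc_lt_top ?_⟩
    filter_upwards [MeasureTheory.ae_restrict_mem measurableSet_Icc] with τ hτ
    rw [Real.norm_eq_abs, abs_of_nonneg (hbdd τ hτ).1]
    exact (hbdd τ hτ).2
  have hII : ∀ t ∈ Icc (0:ℝ) r₀, IntervalIntegrable h MeasureTheory.volume 0 t := by
    intro t ht
    refine (hIntOn.mono_set ?_).intervalIntegrable
    rw [uIcc_of_le ht.1]
    exact Icc_subset_Icc le_rfl ht.2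
  set J : ℝ → ℝ := fun t => ∫ τ in (0:ℝ)..t, h τ with hJ
  have hJcont : ContinuousOn J (Icc 0 r₀) := by
    have := intervalIntegral.continuousOn_primitive_interval
      (a := 0) (b := r₀) (μ := MeasureTheory.volume) (f := h) (by rwa [uIcc_of_le hr₀])
    rwa [uIcc_of_le hr₀] at this
  have hJnonneg : ∀ t ∈ Icc (0:ℝ) r₀, 0 ≤ J t := fun t ht =>
    intervalIntegral.integral_nonneg ht.1 fun τ hτ =>
      (hbdd τ ⟨hτ.1, le_trans hτ.2 ht.2⟩).1
  set c : ℝ := K k * f (u b) with hc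
  have hcpos : 0 < c := by positivity
  have hJle : ∀ t ∈ Icc (0:ℝ) r₀, J t ≤ c * t ^ (N:ℝ) := by
    intro t ht
    have hint2 : IntervalIntegrable (fun τ => ((N:ℝ) * c) * τ ^ ((N:ℝ) - 1))
        MeasureTheory.volume 0 t := by
      apply ContinuousOn.intervalIntegrable
      exact continuousOn_const.mul (continuousOn_id.rpow_const fun x hx => Or.inr (by linarith))
    have hstep : J t ≤ ∫ τ in (0:ℝ)..t, ((N:ℝ) * c) * τ ^ ((N:ℝ) - 1) := by
      apply intervalIntegral.integral_mono_on ht.1 (hII t ht) hint2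
      intro τ hτ
      have hτI : τ ∈ Icc (0:ℝ) r₀ := ⟨hτ.1, le_trans hτ.2 ht.2⟩
      have hKτ : 0 < K τ := hKpos τ (hIsub hτI)
      have hfτ : 0 < f (u τ) := hfpos _ (hupos τ hτI)
      have hrp : (0:ℝ) ≤ τ ^ ((N:ℝ) - 1) := Real.rpow_nonneg hτ.1 _
      calc h τ ≤ (N:ℝ) * τ ^ ((N:ℝ) - 1) * K k * f (u b) := by
            apply mul_le_mul
            · exact mul_le_mul_of_nonneg_left (hk hτI) (by positivity)
            · exact hfmono (hupos τ hτI) hM (hb hτI)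
            · exact le_of_lt hfτ
            · positivity
        _ = ((N:ℝ) * c) * τ ^ ((N:ℝ) - 1) := by rw [hc]; ring
    rw [intervalIntegral.integral_const_mul,
      integral_rpow (Or.inl (by linarith : (-1:ℝ) < (N:ℝ) - 1))] at hstep
    have h0 : (0:ℝ) ^ ((N:ℝ) - 1 + 1) = 0 := Real.zero_rpow (by linarith)
    rw [h0] at hstep
    have : (N:ℝ) * c * ((t ^ ((N:ℝ) - 1 + 1) - 0) / ((N:ℝ) - 1 + 1)) = c * t ^ (N:ℝ) := by
      have : (N:ℝ) - 1 + 1 = (N:ℝ) := by ring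
      rw [this]
      field_simp
      ring
    linarith [hstep, this ▸ hstep]
  set q : ℝ := ((N:ℝ) - 1) / N with hq
  have hq0 : 0 < q := by positivity
  set G : ℝ → ℝ := fun t => t ^ ((2:ℝ) - N) / ((N:ℝ) - 1) * (J t) ^ q with hG
  have hGbdd : ∀ t ∈ Icc (0:ℝ) r₀, ‖G t‖ ≤ c ^ q / ((N:ℝ) - 1) := by
    intro t ht
    have hGnn : 0 ≤ G t := by
      apply mul_nonneg
      · exact div_nonneg (Real.rpow_nonneg ht.1 _) (by linarith)
      · exact Real.rpow_nonneg (hJnonneg t ht) _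
    rw [Real.norm_eq_abs, abs_of_nonneg hGnn]
    rcases eq_or_lt_of_le ht.1 with h0 | h0
    · have : J 0 = 0 := intervalIntegral.integral_same
      simp only [hG, ← h0, this, Real.zero_rpow (ne_of_gt hq0), mul_zero]
      positivity
    · have hJt : (J t) ^ q ≤ c ^ q * t ^ ((N:ℝ) - 1) := by
        calc (J t) ^ q ≤ (c * t ^ (N:ℝ)) ^ q :=
              Real.rpow_le_rpow (hJnonneg t ht) (hJle t ht) (le_of_lt hq0)
          _ = c ^ q * (t ^ (N:ℝ)) ^ q :=
              Real.mul_rpow (le_of_lt hcpos) (Real.rpow_nonneg ht.1 _)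
          _ = c ^ q * t ^ ((N:ℝ) * q) := by rw [← Real.rpow_mul ht.1]
          _ = c ^ q * t ^ ((N:ℝ) - 1) := by
              congr 1
              congr 1
              rw [hq]
              field_simp
      calc G t ≤ t ^ ((2:ℝ) - N) / ((N:ℝ) - 1) * (c ^ q * t ^ ((N:ℝ) - 1)) := by
            apply mul_le_mul_of_nonneg_left hJt
            exact div_nonneg (Real.rpow_nonneg ht.1 _) (by linarith)
        _ = c ^ q / ((N:ℝ) - 1) * (t ^ ((2:ℝ) - N) * t ^ ((N:ℝ) - 1)) := by ring
        _ = c ^ q / ((N:ℝ) - 1) * t := by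
            rw [← Real.rpow_add h0]
            norm_num
        _ ≤ c ^ q / ((N:ℝ) - 1) * 1 := by
            apply mul_le_mul_of_nonneg_left (le_of_lt (lt_of_le_of_lt ht.2 hr₁))
            positivity
        _ = c ^ q / ((N:ℝ) - 1) := mul_one _
  have hGASM : MeasureTheory.AEStronglyMeasurable G
      (MeasureTheory.volume.restrict (Icc 0 r₀)) := by
    have h1 : Measurable (fun t : ℝ => t ^ ((2:ℝ) - N) / ((N:ℝ) - 1)) :=
      (measurable_id.pow_const _).div_const _
    have h2 : ContinuousOn (fun t => (J t) ^ q) (Icc 0 r₀) :=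
      hJcont.rpow_const fun x hx => Or.inr (le_of_lt hq0)
    exact h1.aestronglyMeasurable.mul (h2.aestronglyMeasurable measurableSet_Icc)
  have hGint : MeasureTheory.IntegrableOn G (Icc 0 r₀) := by
    refine ⟨hGASM, MeasureTheory.HasFiniteIntegral.restrict_of_bounded
      (C := c ^ q / ((N:ℝ) - 1)) measure_Icc_lt_top ?_⟩
    filter_upwards [MeasureTheory.ae_restrict_mem measurableSet_Icc] with t ht
    exact hGbdd t ht
  exact ⟨hIntOn, (hGint.mono_set (by rw [uIcc_of_le hr₀])).intervalIntegrable⟩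

/-- Comparison principle in integral form. -/
theorem stmt_7 (N : ℕ) (hN : 2 ≤ N) (T : ℝ) (hT0 : 0 < T) (hT1 : T ≤ 1)
    (K : ℝ → ℝ) (hKpos : ∀ τ ∈ Ico (0:ℝ) 1, 0 < K τ) (hKcont : ContinuousOn K (Ico 0 1))
    (f : ℝ → ℝ) (hfpos : ∀ s > (0:ℝ), 0 < f s) (hfmono : MonotoneOn f (Ioi 0))
    (u₁ u₂ : ℝ → ℝ)
    (h₁cont : ContinuousOn u₁ (Ico 0 T)) (h₂cont : ContinuousOn u₂ (Ico 0 T))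
    (h₁pos : ∀ r ∈ Ico (0:ℝ) T, 0 < u₁ r) (h₂pos : ∀ r ∈ Ico (0:ℝ) T, 0 < u₂ r)
    (h0 : u₁ 0 < u₂ 0)
    (hsub : ∀ r ∈ Ico (0:ℝ) T,
      u₁ r ≤ u₁ 0 + ∫ t in (0:ℝ)..r, t ^ ((2:ℝ) - N) / ((N:ℝ) - 1) *
        (∫ τ in (0:ℝ)..t, (N:ℝ) * τ ^ ((N:ℝ) - 1) * K τ * f (u₁ τ)) ^ (((N:ℝ) - 1) / N))
    (hsup : ∀ r ∈ Ico (0:ℝ) T,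
      u₂ r ≥ u₂ 0 + ∫ t in (0:ℝ)..r, t ^ ((2:ℝ) - N) / ((N:ℝ) - 1) *
        (∫ τ in (0:ℝ)..t, (N:ℝ) * τ ^ ((N:ℝ) - 1) * K τ * f (u₂ τ)) ^ (((N:ℝ) - 1) / N)) :
    ∀ r ∈ Ico (0:ℝ) T, u₁ r < u₂ r := by
  by_contra hcon
  push_neg at hcon
  obtain ⟨r, hrmem, hru⟩ := hcon
  have hNR : (2:ℝ) ≤ (N:ℝ) := by exact_mod_cast hN
  have hN1 : (0:ℝ) < (N:ℝ) - 1 := by linarith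
  set B : Set ℝ := Icc 0 r ∩ (fun x => u₂ x - u₁ x) ⁻¹' Iic 0 with hB
  have hrT : Icc (0:ℝ) r ⊆ Ico 0 T := fun x hx => ⟨hx.1, lt_of_le_of_lt hx.2 hrmem.2⟩
  have hBclosed : IsClosed B :=
    ((h₂cont.mono hrT).sub (h₁cont.mono hrT)).preimage_isClosed_of_isClosed
      isClosed_Icc isClosed_Iic
  have hrB : r ∈ B := ⟨⟨hrmem.1, le_rfl⟩, by simp [sub_nonpos.2 hru]⟩
  set r₀ : ℝ := sInf B with hr₀def
  have hr₀B : r₀ ∈ B := hBclosed.csInf_mem ⟨r, hrB⟩ ⟨0, fun x hx => hx.1.1⟩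
  have hr₀r : r₀ ∈ Icc (0:ℝ) r := hr₀B.1
  have hr₀T : r₀ ∈ Ico (0:ℝ) T := hrT hr₀r
  have hur₀ : u₂ r₀ ≤ u₁ r₀ := by
    have := hr₀B.2
    simpa [sub_nonpos] using this
  have hlt : ∀ s ∈ Icc (0:ℝ) r₀, s ≠ r₀ → u₁ s < u₂ s := by
    intro s hs hsne
    by_contra hsle
    push_neg at hsle
    have hsB : s ∈ B :=
      ⟨⟨hs.1, le_trans hs.2 hr₀r.2⟩, by simp [sub_nonpos.2 hsle]⟩
    have := csInf_le (⟨0, fun x hx => hx.1.1⟩ : BddBelow B) hsB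
    exact hsne (le_antisymm hs.2 this)
  have hIsubT : Icc (0:ℝ) r₀ ⊆ Ico 0 T :=
    fun x hx => ⟨hx.1, lt_of_le_of_lt hx.2 hr₀T.2⟩
  have hr₁ : r₀ < 1 := lt_of_lt_of_le hr₀T.2 hT1
  obtain ⟨hInt₁, hG₁⟩ := stmt7_aux N hN r₀ hr₀r.1 hr₁ K hKpos hKcont f hfpos hfmono u₁
    (h₁cont.mono hIsubT) (fun τ hτ => h₁pos τ (hIsubT hτ))
  obtain ⟨hInt₂, hG₂⟩ := stmt7_aux N hN r₀ hr₀r.1 hr₁ K hKpos hKcont f hfpos hfmono u₂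
    (h₂cont.mono hIsubT) (fun τ hτ => h₂pos τ (hIsubT hτ))
  set h₁ : ℝ → ℝ := fun τ => (N:ℝ) * τ ^ ((N:ℝ) - 1) * K τ * f (u₁ τ) with hh₁
  set h₂ : ℝ → ℝ := fun τ => (N:ℝ) * τ ^ ((N:ℝ) - 1) * K τ * f (u₂ τ) with hh₂
  have hII₁ : ∀ t ∈ Icc (0:ℝ) r₀, IntervalIntegrable h₁ MeasureTheory.volume 0 t := by
    intro t ht
    refine (hInt₁.mono_set ?_).intervalIntegrable
    rw [uIcc_of_le ht.1]; exact Icc_subset_Icc le_rfl ht.2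
  have hII₂ : ∀ t ∈ Icc (0:ℝ) r₀, IntervalIntegrable h₂ MeasureTheory.volume 0 t := by
    intro t ht
    refine (hInt₂.mono_set ?_).intervalIntegrable
    rw [uIcc_of_le ht.1]; exact Icc_subset_Icc le_rfl ht.2
  set J₁ : ℝ → ℝ := fun t => ∫ τ in (0:ℝ)..t, h₁ τ with hJ₁
  set J₂ : ℝ → ℝ := fun t => ∫ τ in (0:ℝ)..t, h₂ τ with hJ₂
  have hJ₁nonneg : ∀ t ∈ Icc (0:ℝ) r₀, 0 ≤ J₁ t := by
    intro t ht
    apply intervalIntegral.integral_nonneg ht.1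
    intro τ hτ
    have hτI : τ ∈ Ico (0:ℝ) T := hIsubT ⟨hτ.1, le_trans hτ.2 ht.2⟩
    have h1 : 0 < K τ := hKpos τ ⟨hτI.1, lt_of_lt_of_le hτI.2 hT1⟩
    have h2 : 0 < f (u₁ τ) := hfpos _ (h₁pos τ hτI)
    have h3 : (0:ℝ) ≤ τ ^ ((N:ℝ) - 1) := Real.rpow_nonneg hτ.1 _
    positivity
  have hJle : ∀ t ∈ Icc (0:ℝ) r₀, J₁ t ≤ J₂ t := by
    intro t ht
    apply intervalIntegral.integral_mono_ae_restrict ht.1 (hII₁ t ht) (hII₂ t ht)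
    have hne : ∀ᵐ τ ∂(MeasureTheory.volume.restrict (Icc (0:ℝ) t)), τ ≠ r₀ := by
      apply MeasureTheory.ae_restrict_of_ae
      rw [MeasureTheory.ae_iff]
      simpa using MeasureTheory.measure_singleton (μ := MeasureTheory.volume) r₀
    filter_upwards [hne, MeasureTheory.ae_restrict_mem measurableSet_Icc] with τ hτne hτ
    have hτI : τ ∈ Icc (0:ℝ) r₀ := ⟨hτ.1, le_trans hτ.2 ht.2⟩
    have hτT : τ ∈ Ico (0:ℝ) T := hIsubT hτI
    have hu12 : u₁ τ ≤ u₂ τ := le_of_lt (hlt τ hτI hτne)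
    have hf12 : f (u₁ τ) ≤ f (u₂ τ) := hfmono (h₁pos τ hτT) (h₂pos τ hτT) hu12
    have h1 : 0 < K τ := hKpos τ ⟨hτT.1, lt_of_lt_of_le hτT.2 hT1⟩
    have h3 : (0:ℝ) ≤ τ ^ ((N:ℝ) - 1) := Real.rpow_nonneg hτ.1 _
    have hpre : (0:ℝ) ≤ (N:ℝ) * τ ^ ((N:ℝ) - 1) * K τ := by positivity
    exact mul_le_mul_of_nonneg_left hf12 hpre
  have hq0 : (0:ℝ) ≤ ((N:ℝ) - 1) / N := by positivity
  have hGle : ∀ t ∈ Icc (0:ℝ) r₀,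
      t ^ ((2:ℝ) - N) / ((N:ℝ) - 1) * (J₁ t) ^ (((N:ℝ) - 1) / N) ≤
      t ^ ((2:ℝ) - N) / ((N:ℝ) - 1) * (J₂ t) ^ (((N:ℝ) - 1) / N) := by
    intro t ht
    apply mul_le_mul_of_nonneg_left
    · exact Real.rpow_le_rpow (hJ₁nonneg t ht) (hJle t ht) hq0
    · exact div_nonneg (Real.rpow_nonneg ht.1 _) (by linarith)
  have hIntle : (∫ t in (0:ℝ)..r₀, t ^ ((2:ℝ) - N) / ((N:ℝ) - 1) *
        (J₁ t) ^ (((N:ℝ) - 1) / N)) ≤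
      ∫ t in (0:ℝ)..r₀, t ^ ((2:ℝ) - N) / ((N:ℝ) - 1) * (J₂ t) ^ (((N:ℝ) - 1) / N) :=
    intervalIntegral.integral_mono_on hr₀r.1 hG₁ hG₂ hGle
  have hs1 := hsub r₀ hr₀T
  have hs2 := hsup r₀ hr₀T
  linarith
end

section
/- With g the inverse of G as above, g is twice differentiable on (0,∞) and g''(t) = f(g(t)) / ((2N−1)/(N−1)·F(g(t)))^{1/(2N−1)}; consequently (g'(t))^{1/(N−1)} · g''(t) = f(g(t)) for all t > 0. -/
open Set Filter Topology intervalIntegral MeasureTheory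

/-- The inverse g of G is twice differentiable on (0,∞) with
g''(t) = f(g(t)) / ((2N−1)/(N−1)·F(g(t)))^{1/(2N−1)}; consequently
(g'(t))^{1/(N−1)} · g''(t) = f(g(t)) for all t > 0. -/
theorem stmt_10 (N : ℕ) (hN : 2 ≤ N)
    (f : ℝ → ℝ) (hfpos : ∀ s > (0:ℝ), 0 < f s) (hfmono : MonotoneOn f (Ioi 0))
    (hfcont : ContinuousOn f (Ioi 0))
    (F : ℝ → ℝ) (hF : ∀ τ, F τ = ∫ s in (0:ℝ)..τ, f s)
    (a : ℝ) (ha : 0 < a) (hFa : 0 < F a)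
    (G : ℝ → ℝ)
    (hG : ∀ t, G t = ∫ τ in a..t,
      ((2 * (N:ℝ) - 1) / ((N:ℝ) - 1) * F τ) ^ (-(((N:ℝ) - 1) / (2 * N - 1))))
    (hGmono : StrictMonoOn G (Ici a)) (hGtop : Tendsto G atTop atTop)
    (g : ℝ → ℝ) (hgG : ∀ t ≥ a, g (G t) = t) (hGg : ∀ s ≥ (0:ℝ), G (g s) = s)
    (hgmem : ∀ s ≥ (0:ℝ), a ≤ g s) :
    ∀ t > (0:ℝ),
      HasDerivAt (deriv g)
        (f (g t) / ((2 * (N:ℝ) - 1) / ((N:ℝ) - 1) * F (g t)) ^ ((1:ℝ) / (2 * N - 1))) t ∧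
      (deriv g t) ^ (((N:ℝ) - 1)⁻¹) * deriv (deriv g) t = f (g t) := by
  have hN1 : (1:ℝ) < (N:ℝ) := by exact_mod_cast lt_of_lt_of_le one_lt_two hN
  set n : ℝ := (N:ℝ) with hn
  have hd : (0:ℝ) < n - 1 := by linarith
  have h2 : (0:ℝ) < 2 * n - 1 := by linarith
  set α : ℝ := (2 * n - 1) / (n - 1) with hα
  have hαpos : 0 < α := div_pos h2 hd
  set p : ℝ := (n - 1) / (2 * n - 1) with hp
  have hppos : 0 < p := div_pos hd h2
  have hαp : α * p = 1 := by rw [hα, hp]; field_simp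
  -- integrability of f on [0, t]
  have hInt0a : IntervalIntegrable f volume 0 a := by
    by_contra h
    have := hFa
    rw [hF a, intervalIntegral.integral_undef h] at this
    exact lt_irrefl _ this
  have hIntf : ∀ t, 0 < t → IntervalIntegrable f volume 0 t := by
    intro t ht
    rcases le_total t a with h | h
    · exact hInt0a.mono_set (uIcc_subset_uIcc left_mem_uIcc (by
        rw [uIcc_of_le ha.le]; exact ⟨ht.le, h⟩))
    · refine hInt0a.trans ?_
      apply ContinuousOn.intervalIntegrable
      refine hfcont.mono ?_
      rw [uIcc_of_le h]
      exact fun x hx => lt_of_lt_of_le ha hx.1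
  -- F has derivative f on (0, ∞)
  have hFeq : F = fun u => ∫ s in (0:ℝ)..u, f s := funext hF
  have hFd : ∀ t, 0 < t → HasDerivAt F (f t) t := by
    intro t ht
    rw [hFeq]
    exact intervalIntegral.integral_hasDerivAt_right (hIntf t ht)
      (hfcont.stronglyMeasurableAtFilter isOpen_Ioi t ht)
      (hfcont.continuousAt (Ioi_mem_nhds ht))
  -- F is positive on [a, ∞)
  have hFpos : ∀ t, a ≤ t → 0 < F t := by
    intro t htl
    have hIat : IntervalIntegrable f volume a t := by
      apply ContinuousOn.intervalIntegrable
      refine hfcont.mono ?_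
      rw [uIcc_of_le htl]
      exact fun x hx => lt_of_lt_of_le ha hx.1
    have hsplit : F a + ∫ s in a..t, f s = F t := by
      rw [hF a, hF t]
      exact intervalIntegral.integral_add_adjacent_intervals hInt0a hIat
    have hnn : 0 ≤ ∫ s in a..t, f s :=
      intervalIntegral.integral_nonneg htl
        (fun u hu => (hfpos u (lt_of_lt_of_le ha hu.1)).le)
    linarith
  -- c : the integrand of G
  set c : ℝ → ℝ := fun τ => (α * F τ) ^ (-p) with hc
  have hGeq : G = fun t => ∫ τ in a..t, c τ := funext hG
  have hccont : ∀ t, a ≤ t → ContinuousAt c t := by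
    intro t htl
    have hFt : 0 < α * F t := mul_pos hαpos (hFpos t htl)
    exact (continuousAt_const.mul (hFd t (lt_of_lt_of_le ha htl)).continuousAt).rpow_const
      (Or.inl hFt.ne')
  have hccontOn : ContinuousOn c (Ici a) := fun t ht => (hccont t ht).continuousWithinAt
  have hccontOn' : ContinuousOn c (Ioi a) := hccontOn.mono Ioi_subset_Ici_self
  -- G has derivative c on (a, ∞)
  have hGd : ∀ t, a < t → HasDerivAt G (c t) t := by
    intro t htl
    rw [hGeq]
    refine intervalIntegral.integral_hasDerivAt_right ?_
      (hccontOn'.stronglyMeasurableAtFilter isOpen_Ioi t htl)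
      (hccont t htl.le)
    apply ContinuousOn.intervalIntegrable
    refine hccontOn.mono ?_
    rw [uIcc_of_le htl.le]
    exact fun x hx => hx.1
  -- g s > a for s > 0
  have hGa : G a = 0 := by rw [hG a, intervalIntegral.integral_same]
  have hga : ∀ s, 0 < s → a < g s := by
    intro s hs
    rcases lt_or_eq_of_le (hgmem s hs.le) with h | h
    · exact h
    · exfalso
      have := hGg s hs.le
      rw [← h, hGa] at this
      linarith
  -- g is strictly monotone on Ici 0
  have hgm : StrictMonoOn g (Ici 0) := by
    intro s1 h1 s2 h2' h12
    by_contra hle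
    push_neg at hle
    have : G (g s2) ≤ G (g s1) :=
      hGmono.monotoneOn (hgmem s2 h2') (hgmem s1 h1) hle
    rw [hGg s1 h1, hGg s2 h2'] at this
    linarith
  -- g is continuous at each s > 0
  have hgcont : ∀ s, 0 < s → ContinuousAt g s := by
    intro s hs
    refine StrictMonoOn.continuousAt_of_image_mem_nhds
      (hgm.mono (Ioi_subset_Ici_self : Ioi (0:ℝ) ⊆ Ici 0)) (Ioi_mem_nhds hs) ?_
    refine mem_of_superset (Ioi_mem_nhds (hga s hs)) ?_
    intro x hx
    have hxa : a ≤ x := (le_of_lt hx)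
    have hGx : 0 < G x := by
      rw [← hGa]; exact hGmono (self_mem_Ici) hxa hx
    exact ⟨G x, hGx, hgG x hxa⟩
  -- first derivative of g
  have hzpos : ∀ s, 0 < s → 0 < α * F (g s) := fun s hs =>
    mul_pos hαpos (hFpos (g s) (hgmem s hs.le))
  have hcinv : ∀ s, 0 < s → (c (g s))⁻¹ = (α * F (g s)) ^ p := by
    intro s hs
    simp only [hc]
    rw [Real.rpow_neg (hzpos s hs).le, inv_inv]
  have hgd : ∀ s, 0 < s → HasDerivAt g ((α * F (g s)) ^ p) s := by
    intro s hs
    have h1 : HasDerivAt g (c (g s))⁻¹ s := by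
      refine HasDerivAt.of_local_left_inverse (hgcont s hs) (hGd (g s) (hga s hs)) ?_ ?_
      · exact ne_of_gt (Real.rpow_pos_of_pos (hzpos s hs) _)
      · exact Filter.eventually_of_mem (Ioi_mem_nhds hs) fun y hy => hGg y (le_of_lt hy)
    rwa [hcinv s hs] at h1
  have hderivg : ∀ s, 0 < s → deriv g s = (α * F (g s)) ^ p := fun s hs => (hgd s hs).deriv
  -- second derivative
  intro t ht
  have hz := hzpos t ht
  have hzne : (α * F (g t)) ≠ 0 := hz.ne'
  have hφd : HasDerivAt (fun s => (α * F (g s)) ^ p)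
      ((α * f (g t)) * p * (α * F (g t)) ^ (p - 1) * ((α * F (g t)) ^ p)) t := by
    have h1 : HasDerivAt (fun x => α * F x) (α * f (g t)) (g t) :=
      ((hFd (g t) (lt_trans ha (hga t ht))).const_mul α)
    have h2 : HasDerivAt (fun x => (α * F x) ^ p)
        ((α * f (g t)) * p * (α * F (g t)) ^ (p - 1)) (g t) :=
      h1.rpow_const (Or.inl hzne)
    exact h2.comp t (hgd t ht)
  -- the value equals f (g t) / (α * F (g t)) ^ (1/(2n-1))
  have hval : (α * f (g t)) * p * (α * F (g t)) ^ (p - 1) * ((α * F (g t)) ^ p)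
      = f (g t) / (α * F (g t)) ^ ((1:ℝ) / (2 * n - 1)) := by
    set z := α * F (g t) with hzdef
    have h1 : z ^ (p - 1) * z ^ p = z ^ (p - 1 + p) := (Real.rpow_add hz _ _).symm
    have h2 : p - 1 + p = -(1 / (2 * n - 1)) := by
      rw [hp, div_sub_one h2.ne', ← add_div, ← neg_div]; congr 1; ring
    have h3 : z ^ (-(1 / (2 * n - 1))) = (z ^ ((1:ℝ) / (2 * n - 1)))⁻¹ :=
      Real.rpow_neg hz.le _
    calc (α * f (g t)) * p * z ^ (p - 1) * (z ^ p)
        = (α * p) * f (g t) * (z ^ (p - 1) * z ^ p) := by ring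
      _ = f (g t) * z ^ (-(1 / (2 * n - 1))) := by rw [hαp, h1, h2]; ring
      _ = f (g t) / z ^ ((1:ℝ) / (2 * n - 1)) := by rw [h3]; simp [div_eq_mul_inv]
  have heq : deriv g =ᶠ[𝓝 t] fun s => (α * F (g s)) ^ p :=
    Filter.eventuallyEq_of_mem (Ioi_mem_nhds ht) fun y hy => hderivg y hy
  have hdd : HasDerivAt (deriv g)
      (f (g t) / (α * F (g t)) ^ ((1:ℝ) / (2 * n - 1))) t := by
    rw [← hval]
    exact hφd.congr_of_eventuallyEq heq
  refine ⟨hdd, ?_⟩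
  have hdd' : deriv (deriv g) t = f (g t) / (α * F (g t)) ^ ((1:ℝ) / (2 * n - 1)) := hdd.deriv
  rw [hdd', hderivg t ht]
  have hpe : p * (n - 1)⁻¹ = (1:ℝ) / (2 * n - 1) := by rw [hp]; field_simp
  have hpow : ((α * F (g t)) ^ p) ^ ((n - 1)⁻¹) = (α * F (g t)) ^ ((1:ℝ) / (2 * n - 1)) := by
    rw [← Real.rpow_mul hz.le, hpe]
  have hw : (0:ℝ) < (α * F (g t)) ^ ((1:ℝ) / (2 * n - 1)) := Real.rpow_pos_of_pos hz _
  rw [hpow, mul_comm, div_mul_cancel₀ _ hw.ne']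
end

section
/- Let p : (0,1) → (0,∞) be C¹ with p' < 0, P(t) = ∫_t^1 p(s)ds, and φ(t) = ∫_t^1 ((N/(N−1))P(τ))^{(N−1)/N} dτ. Then for all t ∈ (0,1): (φ'(t))² / (φ(t)·φ''(t)) ≤ (2N−1)/(N−1). -/
open Set Filter Topology intervalIntegral MeasureTheory

/-- For all t ∈ (0,1): (φ'(t))²/(φ(t)·φ''(t)) ≤ (2N−1)/(N−1). -/
theorem stmt_14 (N : ℕ) (hN : 2 ≤ N)
    (p : ℝ → ℝ) (hp : ContDiffOn ℝ 1 p (Ioo 0 1)) (hppos : ∀ t ∈ Ioo (0:ℝ) 1, 0 < p t)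
    (hp' : ∀ t ∈ Ioo (0:ℝ) 1, deriv p t < 0)
    (P : ℝ → ℝ) (hP : ∀ τ, P τ = ∫ s in τ..1, p s)
    (hPpos : ∀ t ∈ Ioo (0:ℝ) 1, 0 < P t)
    (φ : ℝ → ℝ)
    (hφ : ∀ t, φ t = ∫ τ in t..1, ((N:ℝ) / ((N:ℝ) - 1) * P τ) ^ (((N:ℝ) - 1) / N))
    (hφpos : ∀ t ∈ Ioo (0:ℝ) 1, 0 < φ t) :
    ∀ t ∈ Ioo (0:ℝ) 1,
      (deriv φ t) ^ 2 / (φ t * deriv (deriv φ) t) ≤ (2 * (N:ℝ) - 1) / ((N:ℝ) - 1) := by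
  have hN2 : (2:ℝ) ≤ (N:ℝ) := by exact_mod_cast hN
  set c : ℝ := (N:ℝ) / ((N:ℝ) - 1) with hc
  set α : ℝ := ((N:ℝ) - 1) / (N:ℝ) with hα
  set K : ℝ := (2 * (N:ℝ) - 1) / ((N:ℝ) - 1) with hK
  have hNpos : (0:ℝ) < (N:ℝ) := by linarith
  have hN1pos : (0:ℝ) < (N:ℝ) - 1 := by linarith
  have hcpos : 0 < c := div_pos hNpos hN1pos
  have hαpos : 0 < α := div_pos hN1pos hNpos
  have hα1 : α < 1 := by
    rw [hα, div_lt_one hNpos]; linarith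
  have hKα : K * α = α + 1 := by
    rw [hK, hα]; field_simp; ring
  -- continuity / monotonicity of p
  have hpc : ContinuousOn p (Ioo 0 1) := hp.continuousOn
  have hanti : StrictAntiOn p (Ioo (0:ℝ) 1) := by
    refine strictAntiOn_of_deriv_neg (convex_Ioo 0 1) hpc ?_
    rw [interior_Ioo]; exact hp'
  -- p is interval integrable on subintervals of (0,1]
  have hpint : ∀ a ∈ Ioo (0:ℝ) 1, IntegrableOn p (Ioc a 1) := by
    intro a ha
    rw [integrableOn_Ioc_iff_integrableOn_Ioo]
    have hsub : Ioo a 1 ⊆ Ioo (0:ℝ) 1 := Ioo_subset_Ioo ha.1.le le_rfl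
    have hmeas : AEStronglyMeasurable p (volume.restrict (Ioo a 1)) :=
      (hpc.mono hsub).aestronglyMeasurable measurableSet_Ioo
    refine Integrable.mono' (integrable_const (p a)) hmeas ?_
    filter_upwards [ae_restrict_mem measurableSet_Ioo] with x hx
    rw [Real.norm_eq_abs, abs_of_pos (hppos x (hsub hx))]
    exact (hanti ha (hsub hx) hx.1).le
  have hpII : ∀ a ∈ Ioo (0:ℝ) 1, IntervalIntegrable p volume a 1 := by
    intro a ha
    rw [intervalIntegrable_iff, uIoc_of_le ha.2.le]
    exact hpint a ha
  -- continuity of P on Icc a 1 for a ∈ (0,1)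
  have hPcont : ∀ a ∈ Ioo (0:ℝ) 1, ContinuousOn P (Icc a 1) := by
    intro a ha
    have hInt : IntegrableOn p (uIcc a 1) := by
      rw [uIcc_of_le ha.2.le, integrableOn_Icc_iff_integrableOn_Ioc]
      exact hpint a ha
    have h1 : ContinuousOn (fun s => (∫ x in a..1, p x) - ∫ x in a..s, p x) (Icc a 1) := by
      have := intervalIntegral.continuousOn_primitive_interval (f := p) (a := a) (b := 1)
        (μ := volume) hInt
      rw [uIcc_of_le ha.2.le] at this
      exact (continuousOn_const.sub this)
    refine h1.congr ?_
    intro s hs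
    have hs1 : IntervalIntegrable p volume a s := by
      apply (hpII a ha).mono_set
      rw [uIcc_of_le hs.1, uIcc_of_le ha.2.le]
      exact Icc_subset_Icc le_rfl hs.2
    have hs2 : IntervalIntegrable p volume s 1 := by
      apply (hpII a ha).mono_set
      rw [uIcc_of_le hs.2, uIcc_of_le ha.2.le]
      exact Icc_subset_Icc hs.1 le_rfl
    have := intervalIntegral.integral_add_adjacent_intervals hs1 hs2
    rw [hP s]
    exact eq_sub_of_add_eq' this
  -- derivative of P
  have hPderiv : ∀ s ∈ Ioo (0:ℝ) 1, HasDerivAt P (-(p s)) s := by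
    intro s hs
    have h1 : HasDerivAt (fun u => ∫ x in u..1, p x) (-(p s)) s :=
      intervalIntegral.integral_hasDerivAt_left (hpII s hs)
        (hpc.stronglyMeasurableAtFilter isOpen_Ioo s hs)
        (hpc.continuousAt (Ioo_mem_nhds hs.1 hs.2))
    have : P = fun u => ∫ x in u..1, p x := funext hP
    rw [this]; exact h1
  have hPcont' : ContinuousOn P (Ioo 0 1) := fun s hs =>
    ((hPderiv s hs).continuousAt).continuousWithinAt
  -- the integrand q
  set q : ℝ → ℝ := fun s => (c * P s) ^ α with hq
  have hqcont : ∀ a ∈ Ioo (0:ℝ) 1, ContinuousOn q (Icc a 1) := by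
    intro a ha
    exact (continuousOn_const.mul (hPcont a ha)).rpow_const (fun x _ => Or.inr hαpos.le)
  have hqconto : ContinuousOn q (Ioo 0 1) :=
    (continuousOn_const.mul hPcont').rpow_const (fun x _ => Or.inr hαpos.le)
  have hqII : ∀ a ∈ Ioo (0:ℝ) 1, IntervalIntegrable q volume a 1 := by
    intro a ha
    apply ContinuousOn.intervalIntegrable
    rw [uIcc_of_le ha.2.le]; exact hqcont a ha
  -- φ as integral of q
  have hφq : ∀ s, φ s = ∫ τ in s..1, q τ := by
    intro s; rw [hφ s]
  -- derivative of φ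
  have hφderiv : ∀ s ∈ Ioo (0:ℝ) 1, HasDerivAt φ (-(q s)) s := by
    intro s hs
    have h1 : HasDerivAt (fun u => ∫ x in u..1, q x) (-(q s)) s :=
      intervalIntegral.integral_hasDerivAt_left (hqII s hs)
        (hqconto.stronglyMeasurableAtFilter isOpen_Ioo s hs)
        (hqconto.continuousAt (Ioo_mem_nhds hs.1 hs.2))
    have : φ = fun u => ∫ x in u..1, q x := funext hφq
    rw [this]; exact h1
  have hφcont : ∀ a ∈ Ioo (0:ℝ) 1, ContinuousOn φ (Icc a 1) := by
    intro a ha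
    have hInt : IntegrableOn q (uIcc a 1) := by
      rw [uIcc_of_le ha.2.le]
      exact (hqcont a ha).integrableOn_Icc
    have h1 : ContinuousOn (fun s => (∫ x in a..1, q x) - ∫ x in a..s, q x) (Icc a 1) := by
      have := intervalIntegral.continuousOn_primitive_interval (f := q) (a := a) (b := 1)
        (μ := volume) hInt
      rw [uIcc_of_le ha.2.le] at this
      exact (continuousOn_const.sub this)
    refine h1.congr ?_
    intro s hs
    have hs1 : IntervalIntegrable q volume a s := by
      apply (hqII a ha).mono_set
      rw [uIcc_of_le hs.1, uIcc_of_le ha.2.le]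
      exact Icc_subset_Icc le_rfl hs.2
    have hs2 : IntervalIntegrable q volume s 1 := by
      apply (hqII a ha).mono_set
      rw [uIcc_of_le hs.2, uIcc_of_le ha.2.le]
      exact Icc_subset_Icc hs.1 le_rfl
    have := intervalIntegral.integral_add_adjacent_intervals hs1 hs2
    rw [hφq s]
    exact eq_sub_of_add_eq' this
  -- main proof
  intro t ht
  obtain ⟨ht0, ht1⟩ := ht
  have htI : t ∈ Ioo (0:ℝ) 1 := ⟨ht0, ht1⟩
  have hPt : 0 < P t := hPpos t htI
  have hx : 0 < c * P t := mul_pos hcpos hPt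
  have hpt : 0 < p t := hppos t htI
  have hqt : 0 < q t := Real.rpow_pos_of_pos hx α
  -- second derivative
  have hqderiv : ∀ s ∈ Ioo (0:ℝ) 1, HasDerivAt q (c * -(p s) * α * (c * P s) ^ (α - 1)) s := by
    intro s hs
    have h1 : HasDerivAt (fun u => c * P u) (c * -(p s)) s :=
      (hPderiv s hs).const_mul c
    exact h1.rpow_const (Or.inl (mul_pos hcpos (hPpos s hs)).ne')
  have hd1 : deriv φ t = -(q t) := (hφderiv t htI).deriv
  have hd2 : deriv (deriv φ) t = p t * α * c * (c * P t) ^ (α - 1) := by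
    have hev : deriv φ =ᶠ[𝓝 t] fun s => -(q s) := by
      filter_upwards [Ioo_mem_nhds ht0 ht1] with s hs
      exact (hφderiv s hs).deriv
    rw [hev.deriv_eq]
    have : deriv (fun s => -(q s)) t = -(c * -(p t) * α * (c * P t) ^ (α - 1)) :=
      ((hqderiv t htI).neg).deriv
    rw [this]; ring
  -- key inequality via monotone comparison on [t, 1]
  set G : ℝ → ℝ := fun s => K * α * c * p t * φ s - (c * P s) ^ (α + 1) with hG
  have hGderiv : ∀ s ∈ Ioo t 1, HasDerivAt G
      (K * α * c * p t * -(q s) - c * -(p s) * (α + 1) * (c * P s) ^ (α + 1 - 1)) s := by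
    intro s hs
    have hsI : s ∈ Ioo (0:ℝ) 1 := ⟨lt_trans ht0 hs.1, hs.2⟩
    have h1 : HasDerivAt (fun u => c * P u) (c * -(p s)) s := (hPderiv s hsI).const_mul c
    have h2 : HasDerivAt (fun u => (c * P u) ^ (α + 1))
        (c * -(p s) * (α + 1) * (c * P s) ^ (α + 1 - 1)) s :=
      h1.rpow_const (Or.inl (mul_pos hcpos (hPpos s hsI)).ne')
    exact (((hφderiv s hsI).const_mul (K * α * c * p t)).sub h2)
  have hGanti : AntitoneOn G (Icc t 1) := by
    refine antitoneOn_of_deriv_nonpos (convex_Icc t 1) ?_ ?_ ?_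
    · exact ((hφcont t htI).const_smul (K * α * c * p t)).sub
        (((hPcont t htI).const_smul c).rpow_const (fun x _ => Or.inr (by linarith)))
    · rw [interior_Icc]
      intro s hs
      exact ((hGderiv s hs).differentiableAt).differentiableWithinAt
    · rw [interior_Icc]
      intro s hs
      have hsI : s ∈ Ioo (0:ℝ) 1 := ⟨lt_trans ht0 hs.1, hs.2⟩
      rw [(hGderiv s hs).deriv]
      have hps : p s ≤ p t := (hanti htI hsI hs.1).le
      have hqs : 0 < q s := Real.rpow_pos_of_pos (mul_pos hcpos (hPpos s hsI)) α
      have hsimp : (c * P s) ^ (α + 1 - 1) = q s := by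
        rw [hq]; norm_num
      rw [hsimp]
      have : K * α * c * p t * -(q s) - c * -(p s) * (α + 1) * q s
          = (α + 1) * c * q s * (p s - p t) := by
        rw [hKα] at *
        nlinarith [hKα]
      rw [this]
      have h1 : 0 ≤ (α + 1) * c * q s := by positivity
      nlinarith
  have hG1 : G 1 = 0 := by
    have hP1 : P 1 = 0 := by rw [hP 1, intervalIntegral.integral_same]
    have hφ1 : φ 1 = 0 := by rw [hφq 1, intervalIntegral.integral_same]
    rw [hG]
    simp only [hP1, hφ1, mul_zero]
    rw [Real.zero_rpow (by positivity : α + 1 ≠ 0)]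
    ring
  have hkey : (c * P t) ^ (α + 1) ≤ K * α * c * p t * φ t := by
    have := hGanti (left_mem_Icc.mpr ht1.le) (right_mem_Icc.mpr ht1.le) ht1.le
    rw [hG1] at this
    have hGt : 0 ≤ G t := this
    rw [hG] at hGt
    exact sub_nonneg.mp hGt
  -- conclude
  have hd2pos : 0 < deriv (deriv φ) t := by
    rw [hd2]
    have := Real.rpow_pos_of_pos hx (α - 1)
    positivity
  have hφt : 0 < φ t := hφpos t htI
  rw [hd1, hd2]
  rw [div_le_iff₀ (by positivity)]
  have hx1 : 0 ≤ (c * P t) ^ (α - 1) := (Real.rpow_pos_of_pos hx _).le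
  have h2 : (c * P t) ^ (α + 1) * (c * P t) ^ (α - 1) ≤
      K * α * c * p t * φ t * (c * P t) ^ (α - 1) :=
    mul_le_mul_of_nonneg_right hkey hx1
  have h3 : (-(q t)) ^ 2 = (c * P t) ^ (α + 1) * (c * P t) ^ (α - 1) := by
    rw [hq, neg_pow]
    simp only [neg_neg]
    rw [← Real.rpow_add hx, ← Real.rpow_natCast ((c * P t) ^ α) 2, ← Real.rpow_mul hx.le]
    norm_num
    ring_nf
  rw [h3]
  calc (c * P t) ^ (α + 1) * (c * P t) ^ (α - 1)
      ≤ K * α * c * p t * φ t * (c * P t) ^ (α - 1) := h2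
    _ = K * (φ t * (p t * α * c * (c * P t) ^ (α - 1))) := by ring
end

section
/- Let p : (0,∞) → (0,∞) be C¹ with p'(t) < 0 for all t > 0, and let P(τ) = ∫_τ^1 p(s) ds. Then lim_{t→0⁺} P(t)/p(t) = 0, provided lim_{t→0⁺} p(t) = ∞. -/
open Set Filter Topology intervalIntegral

/-- If p is C¹ on (0,∞), positive, strictly decreasing (p' < 0),
with p(t) → ∞ as t → 0⁺, and P(τ) = ∫_τ^1 p(s) ds, then lim_{t→0⁺} P(t)/p(t) = 0. -/
theorem stmt_16 (p : ℝ → ℝ) (hp : ContDiffOn ℝ 1 p (Ioi 0))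
    (hppos : ∀ t > (0:ℝ), 0 < p t) (hp' : ∀ t > (0:ℝ), deriv p t < 0)
    (hptop : Tendsto p (𝓝[>] 0) atTop)
    (P : ℝ → ℝ) (hP : ∀ τ, P τ = ∫ s in τ..1, p s) :
    Tendsto (fun t => P t / p t) (𝓝[>] 0) (𝓝 0) := by
  have hcont : ContinuousOn p (Ioi 0) := hp.continuousOn
  have hintgr : ∀ a b : ℝ, 0 < a → 0 < b → IntervalIntegrable p MeasureTheory.volume a b := by
    intro a b ha hb
    refine (hcont.mono ?_).intervalIntegrable
    intro x hx
    exact lt_of_lt_of_le (lt_min ha hb) hx.1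
  have hanti : StrictAntiOn p (Ioi 0) := by
    refine strictAntiOn_of_deriv_neg (convex_Ioi 0) hcont ?_
    rw [interior_Ioi]
    exact fun x hx => hp' x hx
  rw [NormedAddCommGroup.tendsto_nhds_zero]
  intro ε hε
  set δ : ℝ := min (ε / 2) (1 / 2) with hδdef
  have hδpos : 0 < δ := lt_min (by linarith) (by norm_num)
  have hδle : δ ≤ ε / 2 := min_le_left _ _
  have hδle1 : δ ≤ 1 / 2 := min_le_right _ _
  set C : ℝ := ∫ s in δ..1, p s with hCdef
  have hev1 : ∀ᶠ t in 𝓝[>] (0:ℝ), t ∈ Ioo 0 δ :=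
    Ioo_mem_nhdsGT_of_mem ⟨le_refl _, hδpos⟩
  have hev2 : ∀ᶠ t in 𝓝[>] (0:ℝ), 2 * C / ε + 1 < p t :=
    hptop.eventually (eventually_gt_atTop _)
  filter_upwards [hev1, hev2] with t ht hpt
  have ht0 : 0 < t := ht.1
  have htδ : t < δ := ht.2
  have ht1 : t < 1 := lt_of_lt_of_le htδ (by linarith)
  have hptpos : 0 < p t := hppos t ht0
  -- P t = ∫_t^δ + ∫_δ^1
  have hsplit : P t = (∫ s in t..δ, p s) + C := by
    rw [hP, hCdef]
    exact (integral_add_adjacent_intervals (hintgr t δ ht0 hδpos)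
      (hintgr δ 1 hδpos one_pos)).symm
  -- bound ∫_t^δ p ≤ (δ - t) * p t
  have hbound : (∫ s in t..δ, p s) ≤ (δ - t) * p t := by
    have h1 : (∫ s in t..δ, p s) ≤ ∫ _ in t..δ, p t := by
      refine integral_mono_on htδ.le (hintgr t δ ht0 hδpos) intervalIntegrable_const ?_
      intro s hs
      rcases eq_or_lt_of_le hs.1 with h | h
      · rw [← h]
      · exact (hanti (mem_Ioi.mpr ht0) (mem_Ioi.mpr (lt_trans ht0 h)) h).le
    simpa [smul_eq_mul] using h1
  -- P t ≥ 0
  have hPnn : 0 ≤ P t := by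
    rw [hP]
    refine integral_nonneg ht1.le ?_
    intro s hs
    exact (hppos s (lt_of_lt_of_le ht0 hs.1)).le
  -- C ≥ 0
  have hCnn : 0 ≤ C := by
    refine integral_nonneg (by linarith) ?_
    intro s hs
    exact (hppos s (lt_of_lt_of_le hδpos hs.1)).le
  have hPle : P t ≤ δ * p t + C := by
    rw [hsplit]
    nlinarith
  have hfrac : C / p t < ε / 2 := by
    rw [div_lt_iff₀ hptpos]
    have h1 : ε / 2 * (2 * C / ε + 1) = C + ε / 2 := by field_simp
    nlinarith [mul_lt_mul_of_pos_left hpt (half_pos hε)]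
  have : P t / p t ≤ δ + C / p t := by
    calc P t / p t ≤ (δ * p t + C) / p t := by gcongr
      _ = δ + C / p t := by field_simp
  have habs : |P t / p t| = P t / p t := abs_of_nonneg (div_nonneg hPnn hptpos.le)
  rw [Real.norm_eq_abs, habs]
  calc P t / p t ≤ δ + C / p t := this
    _ < ε / 2 + ε / 2 := by
        have := hδle
        linarith
    _ = ε := by ring
end

section
/- Uniqueness of local solutions: Let K : [0,1) → (0,∞) be continuous and f : (0,∞) → (0,∞) nondecreasing and locally Lipschitz, and fix u₀ > 0. Then there exists h > 0 such that the integral equation u(r) = u₀ + ∫₀^r (t^{2−N}/(N−1)) (∫₀^t Nτ^{N−1}K(τ)f(u(τ))dτ)^{(N−1)/N} dt has at most one continuous solution u : [0,h] → ℝ with ‖u − u₀‖_∞ ≤ h. -/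
open Set Filter Topology intervalIntegral MeasureTheory


lemma rpow_diff_le_aux {α m a b : ℝ} (hα0 : 0 < α) (hα1 : α < 1) (hm : 0 < m)
    (hb : m ≤ b) (hba : b ≤ a) : a ^ α - b ^ α ≤ m ^ (α - 1) * (a - b) := by
  rcases eq_or_lt_of_le hba with rfl | hlt
  · simp [sub_self]
  · have h0b : (0:ℝ) < b := hm.trans_le hb
    have key := (Real.strictConcaveOn_rpow hα0 hα1).concaveOn.slope_anti_adjacent
      (x := 0) (y := b) (z := a) (le_refl (0:ℝ)) (by linarith : (0:ℝ) ≤ a) h0b hlt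
    rw [Real.zero_rpow hα0.ne', sub_zero, sub_zero] at key
    have h1 : a ^ α - b ^ α ≤ b ^ (α - 1) * (a - b) := by
      have := (div_le_div_iff₀ (by linarith) h0b).mp key
      have hbb : b ^ α * (a - b) = (b ^ (α-1) * (a - b)) * b := by
        rw [Real.rpow_sub h0b, Real.rpow_one]; field_simp
      nlinarith [this]
    have h2 : b ^ (α - 1) ≤ m ^ (α - 1) :=
      Real.rpow_le_rpow_of_nonpos hm hb (by linarith)
    nlinarith [sub_nonneg.mpr hba]

lemma abs_rpow_sub_rpow_le {α m a b : ℝ} (hα0 : 0 < α) (hα1 : α < 1) (hm : 0 < m)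
    (ha : m ≤ a) (hb : m ≤ b) : |a ^ α - b ^ α| ≤ m ^ (α - 1) * |a - b| := by
  rcases le_total b a with h | h
  · rw [abs_of_nonneg (sub_nonneg.2 (Real.rpow_le_rpow (by linarith) h hα0.le)),
      abs_of_nonneg (sub_nonneg.2 h)]
    exact rpow_diff_le_aux hα0 hα1 hm hb h
  · rw [abs_sub_comm, abs_sub_comm a b,
      abs_of_nonneg (sub_nonneg.2 (Real.rpow_le_rpow (by linarith) h hα0.le)),
      abs_of_nonneg (sub_nonneg.2 h)]
    exact rpow_diff_le_aux hα0 hα1 hm ha h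


lemma aux_cont_pow (N : ℕ) (hN : 2 ≤ N) : Continuous (fun τ : ℝ => τ ^ ((N:ℝ) - 1)) := by
  have hp : (0:ℝ) < (N:ℝ) - 1 := by
    have : (2:ℝ) ≤ N := by exact_mod_cast hN
    linarith
  exact continuous_iff_continuousAt.mpr fun x =>
    Real.continuousAt_rpow_const x _ (Or.inr hp.le)

lemma aux_val (N : ℕ) (hN : 2 ≤ N) (c t : ℝ) :
    (∫ τ in (0:ℝ)..t, (N:ℝ) * (τ ^ ((N:ℝ) - 1) * c)) = c * t ^ (N:ℝ) := by
  have hN2 : (2:ℝ) ≤ N := by exact_mod_cast hN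
  have heq : (fun τ : ℝ => (N:ℝ) * (τ ^ ((N:ℝ) - 1) * c))
      = fun τ : ℝ => ((N:ℝ) * c) * τ ^ ((N:ℝ) - 1) := by
    funext τ; ring
  rw [heq, intervalIntegral.integral_const_mul, integral_rpow (Or.inl (by linarith))]
  rw [show (N:ℝ) - 1 + 1 = (N:ℝ) by ring, Real.zero_rpow (by linarith : (N:ℝ) ≠ 0)]
  field_simp
  ring

lemma aux_G_int (N : ℕ) (hN : 2 ≤ N) {h : ℝ} {g : ℝ → ℝ}
    (hg : ContinuousOn g (Icc 0 h)) {t : ℝ} (ht : t ∈ Icc (0:ℝ) h) :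
    IntervalIntegrable (fun τ => (N:ℝ) * (τ ^ ((N:ℝ) - 1) * g τ)) volume 0 t := by
  apply ContinuousOn.intervalIntegrable
  rw [uIcc_of_le ht.1]
  exact continuousOn_const.mul (((aux_cont_pow N hN).continuousOn).mul
    (hg.mono (Icc_subset_Icc le_rfl ht.2)))

lemma aux_A_bounds (N : ℕ) (hN : 2 ≤ N) {h : ℝ} {g : ℝ → ℝ}
    (hg : ContinuousOn g (Icc 0 h)) {m M' : ℝ}
    (hbd : ∀ τ ∈ Icc (0:ℝ) h, m ≤ g τ ∧ g τ ≤ M') {t : ℝ} (ht : t ∈ Icc (0:ℝ) h) :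
    m * t ^ (N:ℝ) ≤ (∫ τ in (0:ℝ)..t, (N:ℝ) * (τ ^ ((N:ℝ) - 1) * g τ)) ∧
      (∫ τ in (0:ℝ)..t, (N:ℝ) * (τ ^ ((N:ℝ) - 1) * g τ)) ≤ M' * t ^ (N:ℝ) := by
  have hNR : (0:ℝ) < (N:ℝ) := by
    have : (2:ℝ) ≤ N := by exact_mod_cast hN
    linarith
  have hGint := aux_G_int N hN hg ht
  have hcm : IntervalIntegrable (fun τ : ℝ => (N:ℝ) * (τ ^ ((N:ℝ) - 1) * m)) volume 0 t :=
    (continuous_const.mul ((aux_cont_pow N hN).mul continuous_const)).intervalIntegrable 0 t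
  have hcM : IntervalIntegrable (fun τ : ℝ => (N:ℝ) * (τ ^ ((N:ℝ) - 1) * M')) volume 0 t :=
    (continuous_const.mul ((aux_cont_pow N hN).mul continuous_const)).intervalIntegrable 0 t
  constructor
  · rw [← aux_val N hN m t]
    apply intervalIntegral.integral_mono_on ht.1 hcm hGint
    intro τ hτ
    have hτh : τ ∈ Icc (0:ℝ) h := ⟨hτ.1, le_trans hτ.2 ht.2⟩
    have hpow : (0:ℝ) ≤ τ ^ ((N:ℝ) - 1) := Real.rpow_nonneg hτ.1 _
    exact mul_le_mul_of_nonneg_left (mul_le_mul_of_nonneg_left (hbd τ hτh).1 hpow) hNR.le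
  · rw [← aux_val N hN M' t]
    apply intervalIntegral.integral_mono_on ht.1 hGint hcM
    intro τ hτ
    have hτh : τ ∈ Icc (0:ℝ) h := ⟨hτ.1, le_trans hτ.2 ht.2⟩
    have hpow : (0:ℝ) ≤ τ ^ ((N:ℝ) - 1) := Real.rpow_nonneg hτ.1 _
    exact mul_le_mul_of_nonneg_left (mul_le_mul_of_nonneg_left (hbd τ hτh).2 hpow) hNR.le

lemma aux_A_cont (N : ℕ) (hN : 2 ≤ N) {h : ℝ} (hh0 : 0 < h) {g : ℝ → ℝ}
    (hg : ContinuousOn g (Icc 0 h)) :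
    ContinuousOn (fun t => ∫ τ in (0:ℝ)..t, (N:ℝ) * (τ ^ ((N:ℝ) - 1) * g τ)) (Icc 0 h) := by
  have := intervalIntegral.continuousOn_primitive_interval'
    (aux_G_int N hN hg (right_mem_Icc.mpr hh0.le)) (left_mem_uIcc (a := (0:ℝ)) (b := h))
  rwa [uIcc_of_le hh0.le] at this

lemma aux_diff (N : ℕ) (hN : 2 ≤ N) {h : ℝ} {g₁ g₂ : ℝ → ℝ}
    (hg₁ : ContinuousOn g₁ (Icc 0 h)) (hg₂ : ContinuousOn g₂ (Icc 0 h)) {D : ℝ}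
    (hD : ∀ τ ∈ Icc (0:ℝ) h, |g₁ τ - g₂ τ| ≤ D) {t : ℝ} (ht : t ∈ Icc (0:ℝ) h) :
    |(∫ τ in (0:ℝ)..t, (N:ℝ) * (τ ^ ((N:ℝ) - 1) * g₁ τ)) -
      (∫ τ in (0:ℝ)..t, (N:ℝ) * (τ ^ ((N:ℝ) - 1) * g₂ τ))| ≤ D * t ^ (N:ℝ) := by
  have hD0 : 0 ≤ D := le_trans (abs_nonneg _) (hD 0 ⟨le_rfl, ht.1.trans ht.2⟩)
  have hint₁ := aux_G_int N hN hg₁ ht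
  have hint₂ := aux_G_int N hN hg₂ ht
  rw [← intervalIntegral.integral_sub hint₁ hint₂, ← Real.norm_eq_abs]
  have hb : IntervalIntegrable (fun τ : ℝ => (N:ℝ) * (τ ^ ((N:ℝ) - 1) * D)) volume 0 t :=
    (continuous_const.mul ((aux_cont_pow N hN).mul continuous_const)).intervalIntegrable 0 t
  have key := intervalIntegral.norm_integral_le_abs_of_norm_le (μ := volume) (a := 0) (b := t)
    (f := fun τ => (N:ℝ) * (τ ^ ((N:ℝ) - 1) * g₁ τ) - (N:ℝ) * (τ ^ ((N:ℝ) - 1) * g₂ τ))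
    (g := fun τ : ℝ => (N:ℝ) * (τ ^ ((N:ℝ) - 1) * D)) ?_ hb
  · refine le_trans key ?_
    rw [aux_val N hN D t, abs_of_nonneg (mul_nonneg hD0 (Real.rpow_nonneg ht.1 _))]
  · filter_upwards [ae_restrict_mem measurableSet_uIoc] with τ hτ
    rw [uIoc_of_le ht.1] at hτ
    have hτh : τ ∈ Icc (0:ℝ) h := ⟨hτ.1.le, hτ.2.trans ht.2⟩
    have hpow : (0:ℝ) ≤ (N:ℝ) * τ ^ ((N:ℝ) - 1) := by
      have := Real.rpow_nonneg hτ.1.le ((N:ℝ) - 1)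
      positivity
    have heq : (N:ℝ) * (τ ^ ((N:ℝ) - 1) * g₁ τ) - (N:ℝ) * (τ ^ ((N:ℝ) - 1) * g₂ τ)
        = ((N:ℝ) * τ ^ ((N:ℝ) - 1)) * (g₁ τ - g₂ τ) := by ring
    rw [Real.norm_eq_abs, heq, abs_mul, abs_of_nonneg hpow]
    have := hD τ hτh
    nlinarith [abs_nonneg (g₁ τ - g₂ τ)]

lemma aux_F_int (N : ℕ) (hN : 2 ≤ N) {h : ℝ} (hh0 : 0 < h) {g : ℝ → ℝ}
    (hg : ContinuousOn g (Icc 0 h)) {m M' : ℝ} (hm : 0 < m)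
    (hbd : ∀ τ ∈ Icc (0:ℝ) h, m ≤ g τ ∧ g τ ≤ M') {r : ℝ} (hr : r ∈ Icc (0:ℝ) h) :
    IntervalIntegrable (fun t => t ^ ((2:ℝ) - N) / ((N:ℝ) - 1) *
      (∫ τ in (0:ℝ)..t, (N:ℝ) * (τ ^ ((N:ℝ) - 1) * g τ)) ^ (((N:ℝ) - 1) / N))
      volume 0 r := by
  have hN2 : (2:ℝ) ≤ N := by exact_mod_cast hN
  have hNR : (0:ℝ) < (N:ℝ) - 1 := by linarith
  have hN0 : (0:ℝ) < (N:ℝ) := by linarith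
  have hα0 : (0:ℝ) < ((N:ℝ) - 1) / N := by positivity
  have hM' : 0 < M' := lt_of_lt_of_le hm
    (le_trans (hbd 0 ⟨le_rfl, hh0.le⟩).1 (hbd 0 ⟨le_rfl, hh0.le⟩).2)
  set A : ℝ → ℝ := fun t => ∫ τ in (0:ℝ)..t, (N:ℝ) * (τ ^ ((N:ℝ) - 1) * g τ) with hA
  rw [intervalIntegrable_iff_integrableOn_Ioc_of_le hr.1]
  have hIoc : Ioc (0:ℝ) r ⊆ Icc 0 h := fun x hx => ⟨hx.1.le, hx.2.trans hr.2⟩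
  have hArp : ContinuousOn (fun t => (A t) ^ (((N:ℝ) - 1) / N)) (Icc 0 h) :=
    (aux_A_cont N hN hh0 hg).rpow_const (fun x _ => Or.inr hα0.le)
  have hFc : ContinuousOn (fun t => t ^ ((2:ℝ) - N) / ((N:ℝ) - 1) *
      (A t) ^ (((N:ℝ) - 1) / N)) (Ioc 0 r) := by
    apply ContinuousOn.mul
    · apply ContinuousOn.div_const
      intro t ht
      exact (Real.continuousAt_rpow_const t _ (Or.inl (ne_of_gt ht.1))).continuousWithinAt
    · exact hArp.mono hIoc
  apply MeasureTheory.Integrable.mono' (g := fun t => (M' ^ (((N:ℝ) - 1) / N) / ((N:ℝ) - 1)) * t)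
    ((continuous_const.mul continuous_id).integrableOn_Ioc)
    (hFc.aestronglyMeasurable measurableSet_Ioc)
  filter_upwards [ae_restrict_mem measurableSet_Ioc] with t ht
  have ht0 : 0 < t := ht.1
  have hth : t ∈ Icc (0:ℝ) h := hIoc ht
  obtain ⟨hA1, hA2⟩ := aux_A_bounds N hN hg hbd hth
  have hApos : 0 < A t := lt_of_lt_of_le (by positivity) hA1
  have e1 : (A t) ^ (((N:ℝ) - 1) / N) ≤ (M' * t ^ (N:ℝ)) ^ (((N:ℝ) - 1) / N) :=
    Real.rpow_le_rpow hApos.le hA2 hα0.le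
  have e2 : (M' * t ^ (N:ℝ)) ^ (((N:ℝ) - 1) / N)
      = M' ^ (((N:ℝ) - 1) / N) * t ^ ((N:ℝ) - 1) := by
    rw [Real.mul_rpow hM'.le (Real.rpow_nonneg ht0.le _), ← Real.rpow_mul ht0.le]
    congr 1
    field_simp
  have tkey : t ^ ((2:ℝ) - N) * t ^ ((N:ℝ) - 1) = t := by
    rw [← Real.rpow_add ht0, show (2:ℝ) - N + ((N:ℝ) - 1) = 1 by ring, Real.rpow_one]
  have hFnn : 0 ≤ t ^ ((2:ℝ) - N) / ((N:ℝ) - 1) * (A t) ^ (((N:ℝ) - 1) / N) :=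
    mul_nonneg (div_nonneg (Real.rpow_nonneg ht0.le _) hNR.le) (Real.rpow_nonneg hApos.le _)
  rw [Real.norm_eq_abs, abs_of_nonneg hFnn]
  calc t ^ ((2:ℝ) - N) / ((N:ℝ) - 1) * (A t) ^ (((N:ℝ) - 1) / N)
      ≤ t ^ ((2:ℝ) - N) / ((N:ℝ) - 1) * (M' ^ (((N:ℝ) - 1) / N) * t ^ ((N:ℝ) - 1)) := by
        refine mul_le_mul_of_nonneg_left (e1.trans_eq e2) ?_
        exact div_nonneg (Real.rpow_nonneg ht0.le _) hNR.le
    _ = M' ^ (((N:ℝ) - 1) / N) / ((N:ℝ) - 1) * t := by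
        linear_combination (M' ^ (((N:ℝ) - 1) / N) / ((N:ℝ) - 1)) * tkey

set_option maxHeartbeats 1000000 in
/-- Local uniqueness: there exists h > 0 such that the integral equation has
at most one continuous solution u : [0,h] → ℝ with ‖u − u₀‖_∞ ≤ h. -/
theorem stmt_17 (N : ℕ) (hN : 2 ≤ N)
    (K : ℝ → ℝ) (hKpos : ∀ τ ∈ Ico (0:ℝ) 1, 0 < K τ) (hKcont : ContinuousOn K (Ico 0 1))
    (f : ℝ → ℝ) (hfpos : ∀ s > (0:ℝ), 0 < f s) (hfmono : MonotoneOn f (Ioi 0))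
    (hflip : ∀ x > (0:ℝ), ∃ C > (0:ℝ), ∃ ε > (0:ℝ),
      LipschitzOnWith (Real.toNNReal C) f (Metric.ball x ε ∩ Ioi 0))
    (u₀ : ℝ) (hu₀ : 0 < u₀) :
    ∃ h > (0:ℝ), ∀ u v : ℝ → ℝ,
      ContinuousOn u (Icc 0 h) → ContinuousOn v (Icc 0 h) →
      (∀ r ∈ Icc (0:ℝ) h, |u r - u₀| ≤ h) → (∀ r ∈ Icc (0:ℝ) h, |v r - u₀| ≤ h) →
      (∀ r ∈ Icc (0:ℝ) h,
        u r = u₀ + ∫ t in (0:ℝ)..r, t ^ ((2:ℝ) - N) / ((N:ℝ) - 1) *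
          (∫ τ in (0:ℝ)..t, (N:ℝ) * τ ^ ((N:ℝ) - 1) * K τ * f (u τ)) ^ (((N:ℝ) - 1) / N)) →
      (∀ r ∈ Icc (0:ℝ) h,
        v r = u₀ + ∫ t in (0:ℝ)..r, t ^ ((2:ℝ) - N) / ((N:ℝ) - 1) *
          (∫ τ in (0:ℝ)..t, (N:ℝ) * τ ^ ((N:ℝ) - 1) * K τ * f (v τ)) ^ (((N:ℝ) - 1) / N)) →
      ∀ r ∈ Icc (0:ℝ) h, u r = v r := by
  obtain ⟨C, hC, ε, hε, hLip⟩ := hflip u₀ hu₀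
  have hN2 : (2:ℝ) ≤ (N:ℝ) := by exact_mod_cast hN
  have hNR : (0:ℝ) < (N:ℝ) - 1 := by linarith
  have hN0 : (0:ℝ) < (N:ℝ) := by linarith
  have hα0 : (0:ℝ) < ((N:ℝ) - 1) / N := by positivity
  have hα1 : ((N:ℝ) - 1) / N < 1 := by rw [div_lt_one hN0]; linarith
  -- K bounds on [0, 1/2]
  have hsub : Icc (0:ℝ) (1/2) ⊆ Ico 0 1 := fun x hx => ⟨hx.1, by linarith [hx.2]⟩
  obtain ⟨τ₁, hτ₁, hKminH⟩ := isCompact_Icc.exists_isMinOn (α := ℝ)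
    ⟨0, by norm_num⟩ (hKcont.mono hsub)
  obtain ⟨τ₂, hτ₂, hKmaxH⟩ := isCompact_Icc.exists_isMaxOn (α := ℝ)
    ⟨0, by norm_num⟩ (hKcont.mono hsub)
  have hKm : 0 < K τ₁ := hKpos τ₁ (hsub hτ₁)
  have hKM : 0 < K τ₂ := hKpos τ₂ (hsub hτ₂)
  have hfm : 0 < f (u₀ / 2) := hfpos _ (by linarith)
  have hfM : 0 < f (2 * u₀) := hfpos _ (by linarith)
  obtain ⟨c₀, hc₀def⟩ : ∃ c : ℝ, c = K τ₁ * f (u₀ / 2) := ⟨_, rfl⟩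
  have hc₀ : 0 < c₀ := hc₀def ▸ mul_pos hKm hfm
  obtain ⟨C₁, hC₁def⟩ : ∃ c : ℝ, c = c₀ ^ (((N:ℝ) - 1) / N - 1) * (K τ₂ * C) / ((N:ℝ) - 1) :=
    ⟨_, rfl⟩
  have hC₁ : 0 < C₁ := by
    rw [hC₁def]
    exact div_pos (mul_pos (Real.rpow_pos_of_pos hc₀ _) (mul_pos hKM hC)) hNR
  obtain ⟨h, hh0, hh1, hh2, hh3, hh4, hh5⟩ : ∃ h : ℝ, 0 < h ∧ h ≤ 1/2 ∧ h ≤ u₀/2 ∧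
      h ≤ ε/2 ∧ h ≤ 1 ∧ h * (C₁ + 1) ≤ 1 := by
    refine ⟨min (min (1/2) (u₀/2)) (min (ε/2) (min 1 (1/(C₁+1)))), ?_, ?_, ?_, ?_, ?_, ?_⟩
    · apply lt_min (lt_min (by norm_num) (by linarith)) (lt_min (by linarith)
        (lt_min one_pos (div_pos one_pos (by linarith))))
    · exact le_trans (min_le_left _ _) (min_le_left _ _)
    · exact le_trans (min_le_left _ _) (min_le_right _ _)
    · exact le_trans (min_le_right _ _) (min_le_left _ _)
    · exact le_trans (min_le_right _ _) (le_trans (min_le_right _ _) (min_le_left _ _))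
    · have h5 : min (min (1/2) (u₀/2)) (min (ε/2) (min 1 (1/(C₁+1)))) ≤ 1/(C₁+1) :=
        le_trans (min_le_right _ _) (le_trans (min_le_right _ _) (min_le_right _ _))
      rw [← le_div_iff₀ (by linarith : (0:ℝ) < C₁ + 1)]
      exact h5
  refine ⟨h, hh0, ?_⟩
  intro u v hu hv hub hvb hueq hveq
  simp only [mul_assoc] at hueq hveq
  -- range facts
  have hrange : ∀ w : ℝ → ℝ, (∀ r ∈ Icc (0:ℝ) h, |w r - u₀| ≤ h) → ∀ τ ∈ Icc (0:ℝ) h,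
      w τ ∈ Metric.ball u₀ ε ∩ Ioi 0 ∧ f (u₀ / 2) ≤ f (w τ) ∧ f (w τ) ≤ f (2 * u₀) := by
    intro w hwb τ hτ
    have h2 := hwb τ hτ
    rw [abs_le] at h2
    have hwpos : 0 < w τ := by linarith
    refine ⟨⟨?_, hwpos⟩, ?_, ?_⟩
    · rw [Metric.mem_ball, Real.dist_eq]
      exact lt_of_le_of_lt (hwb τ hτ) (by linarith)
    · exact hfmono (mem_Ioi.mpr (by linarith)) (mem_Ioi.mpr hwpos) (by linarith)
    · exact hfmono (mem_Ioi.mpr hwpos) (mem_Ioi.mpr (by linarith)) (by linarith)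
  -- continuity and bounds of g_w := fun τ => K τ * f (w τ)
  have hKIcc : ∀ τ ∈ Icc (0:ℝ) h, K τ₁ ≤ K τ ∧ K τ ≤ K τ₂ := by
    intro τ hτ
    have hτ' : τ ∈ Icc (0:ℝ) (1/2) := ⟨hτ.1, hτ.2.trans hh1⟩
    exact ⟨hKminH hτ', hKmaxH hτ'⟩
  have hgfacts : ∀ w : ℝ → ℝ, ContinuousOn w (Icc 0 h) →
      (∀ r ∈ Icc (0:ℝ) h, |w r - u₀| ≤ h) →
      ContinuousOn (fun τ => K τ * f (w τ)) (Icc 0 h) ∧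
      (∀ τ ∈ Icc (0:ℝ) h, c₀ ≤ K τ * f (w τ) ∧ K τ * f (w τ) ≤ K τ₂ * f (2 * u₀)) := by
    intro w hw hwb
    constructor
    · apply ContinuousOn.mul
      · exact hKcont.mono (fun x hx => ⟨hx.1, by linarith [hx.2, hh1]⟩)
      · exact hLip.continuousOn.comp hw (fun τ hτ => (hrange w hwb τ hτ).1)
    · intro τ hτ
      obtain ⟨hK1, hK2⟩ := hKIcc τ hτ
      obtain ⟨_, hf1, hf2⟩ := hrange w hwb τ hτ
      constructor
      · rw [hc₀def]
        exact mul_le_mul hK1 hf1 hfm.le (le_trans hKm.le hK1)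
      · exact mul_le_mul hK2 hf2 (le_trans hfm.le hf1) hKM.le
  obtain ⟨hgu, hbu⟩ := hgfacts u hu hub
  obtain ⟨hgv, hbv⟩ := hgfacts v hv hvb
  -- max point of |u - v|
  obtain ⟨r₀, hr₀, hmax⟩ := isCompact_Icc.exists_isMaxOn (α := ℝ)
    ⟨0, ⟨le_rfl, hh0.le⟩⟩ ((hu.sub hv).abs)
  obtain ⟨M, hMdef⟩ : ∃ M : ℝ, M = |u r₀ - v r₀| := ⟨_, rfl⟩
  have hM0 : 0 ≤ M := hMdef ▸ abs_nonneg _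
  have hbM : ∀ τ ∈ Icc (0:ℝ) h, |u τ - v τ| ≤ M := fun τ hτ => hMdef ▸ hmax hτ
  suffices hMle : M ≤ 0 by
    intro r hr
    have h1 := le_trans (hbM r hr) hMle
    have h2 := abs_nonneg (u r - v r)
    have : |u r - v r| = 0 := le_antisymm h1 h2
    have := abs_eq_zero.mp this
    linarith [this]
  -- integrability of F_u, F_v on [0, r₀]
  have hM'pos : 0 < K τ₂ * f (2 * u₀) := mul_pos hKM hfM
  have hFu : IntervalIntegrable (fun t => t ^ ((2:ℝ) - N) / ((N:ℝ) - 1) *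
      (∫ τ in (0:ℝ)..t, (N:ℝ) * (τ ^ ((N:ℝ) - 1) * (K τ * f (u τ)))) ^ (((N:ℝ) - 1) / N))
      volume 0 r₀ := aux_F_int N hN hh0 hgu hc₀ hbu hr₀
  have hFv : IntervalIntegrable (fun t => t ^ ((2:ℝ) - N) / ((N:ℝ) - 1) *
      (∫ τ in (0:ℝ)..t, (N:ℝ) * (τ ^ ((N:ℝ) - 1) * (K τ * f (v τ)))) ^ (((N:ℝ) - 1) / N))
      volume 0 r₀ := aux_F_int N hN hh0 hgv hc₀ hbv hr₀
  have hdiff : u r₀ - v r₀ = ∫ t in (0:ℝ)..r₀,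
      (t ^ ((2:ℝ) - N) / ((N:ℝ) - 1) *
        (∫ τ in (0:ℝ)..t, (N:ℝ) * (τ ^ ((N:ℝ) - 1) * (K τ * f (u τ)))) ^ (((N:ℝ) - 1) / N) -
       t ^ ((2:ℝ) - N) / ((N:ℝ) - 1) *
        (∫ τ in (0:ℝ)..t, (N:ℝ) * (τ ^ ((N:ℝ) - 1) * (K τ * f (v τ)))) ^ (((N:ℝ) - 1) / N)) := by
    rw [intervalIntegral.integral_sub hFu hFv, hueq r₀ hr₀, hveq r₀ hr₀]
    ring
  -- difference of the inner functions
  have hgdiff : ∀ τ ∈ Icc (0:ℝ) h, |K τ * f (u τ) - K τ * f (v τ)| ≤ K τ₂ * (C * M) := by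
    intro τ hτ
    obtain ⟨hK1, hK2⟩ := hKIcc τ hτ
    have hKτ : 0 < K τ := lt_of_lt_of_le hKm hK1
    have hlip := hLip.dist_le_mul (u τ) (hrange u hub τ hτ).1 (v τ) (hrange v hvb τ hτ).1
    rw [Real.dist_eq, Real.dist_eq, Real.coe_toNNReal C hC.le] at hlip
    have huv : |u τ - v τ| ≤ M := hbM τ hτ
    have : |K τ * f (u τ) - K τ * f (v τ)| = K τ * |f (u τ) - f (v τ)| := by
      rw [← mul_sub, abs_mul, abs_of_pos hKτ]
    rw [this]
    calc K τ * |f (u τ) - f (v τ)| ≤ K τ * (C * M) := by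
          apply mul_le_mul_of_nonneg_left _ hKτ.le
          calc |f (u τ) - f (v τ)| ≤ C * |u τ - v τ| := hlip
            _ ≤ C * M := mul_le_mul_of_nonneg_left huv hC.le
      _ ≤ K τ₂ * (C * M) := by
          apply mul_le_mul_of_nonneg_right hK2 (mul_nonneg hC.le hM0)
  -- main pointwise bound
  have hb : IntervalIntegrable (fun t : ℝ => (C₁ * M) * t) volume 0 r₀ :=
    (continuous_const.mul continuous_id).intervalIntegrable 0 r₀
  have hae : ∀ᵐ t ∂(volume.restrict (Set.uIoc (0:ℝ) r₀)), ‖(fun t : ℝ =>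
      t ^ ((2:ℝ) - N) / ((N:ℝ) - 1) *
        (∫ τ in (0:ℝ)..t, (N:ℝ) * (τ ^ ((N:ℝ) - 1) * (K τ * f (u τ)))) ^ (((N:ℝ) - 1) / N) -
       t ^ ((2:ℝ) - N) / ((N:ℝ) - 1) *
        (∫ τ in (0:ℝ)..t, (N:ℝ) * (τ ^ ((N:ℝ) - 1) * (K τ * f (v τ)))) ^ (((N:ℝ) - 1) / N)) t‖
      ≤ (C₁ * M) * t := by
    filter_upwards [ae_restrict_mem measurableSet_uIoc] with t ht
    rw [uIoc_of_le hr₀.1] at ht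
    have ht0 : 0 < t := ht.1
    have hth : t ∈ Icc (0:ℝ) h := ⟨ht0.le, ht.2.trans hr₀.2⟩
    set Au : ℝ := ∫ τ in (0:ℝ)..t, (N:ℝ) * (τ ^ ((N:ℝ) - 1) * (K τ * f (u τ))) with hAudef
    set Av : ℝ := ∫ τ in (0:ℝ)..t, (N:ℝ) * (τ ^ ((N:ℝ) - 1) * (K τ * f (v τ))) with hAvdef
    obtain ⟨hAu1, hAu2⟩ := aux_A_bounds N hN hgu hbu hth
    obtain ⟨hAv1, hAv2⟩ := aux_A_bounds N hN hgv hbv hth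
    have hmt : 0 < c₀ * t ^ (N:ℝ) := mul_pos hc₀ (Real.rpow_pos_of_pos ht0 _)
    have habs : |Au ^ (((N:ℝ) - 1) / N) - Av ^ (((N:ℝ) - 1) / N)| ≤
        (c₀ * t ^ (N:ℝ)) ^ (((N:ℝ) - 1) / N - 1) * |Au - Av| :=
      abs_rpow_sub_rpow_le hα0 hα1 hmt hAu1 hAv1
    have hAd : |Au - Av| ≤ K τ₂ * (C * M) * t ^ (N:ℝ) :=
      aux_diff N hN hgu hgv hgdiff hth
    have hmexp : (c₀ * t ^ (N:ℝ)) ^ (((N:ℝ) - 1) / N - 1)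
        = c₀ ^ (((N:ℝ) - 1) / N - 1) * t ^ (-1:ℝ) := by
      rw [Real.mul_rpow hc₀.le (Real.rpow_nonneg ht0.le _), ← Real.rpow_mul ht0.le]
      congr 1
      field_simp
      congr 1; ring
    have tkey : t ^ ((2:ℝ) - N) * (t ^ (-1:ℝ) * t ^ (N:ℝ)) = t := by
      rw [← Real.rpow_add ht0, ← Real.rpow_add ht0,
        show (2:ℝ) - N + (-1 + (N:ℝ)) = 1 by ring, Real.rpow_one]
    have hfac : 0 ≤ t ^ ((2:ℝ) - N) / ((N:ℝ) - 1) :=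
      div_nonneg (Real.rpow_nonneg ht0.le _) hNR.le
    rw [Real.norm_eq_abs, show
        (t ^ ((2:ℝ) - N) / ((N:ℝ) - 1) * Au ^ (((N:ℝ) - 1) / N) -
         t ^ ((2:ℝ) - N) / ((N:ℝ) - 1) * Av ^ (((N:ℝ) - 1) / N))
        = t ^ ((2:ℝ) - N) / ((N:ℝ) - 1) *
          (Au ^ (((N:ℝ) - 1) / N) - Av ^ (((N:ℝ) - 1) / N)) by ring,
      abs_mul, abs_of_nonneg hfac]
    calc t ^ ((2:ℝ) - N) / ((N:ℝ) - 1) * |Au ^ (((N:ℝ) - 1) / N) - Av ^ (((N:ℝ) - 1) / N)|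
        ≤ t ^ ((2:ℝ) - N) / ((N:ℝ) - 1) *
          ((c₀ * t ^ (N:ℝ)) ^ (((N:ℝ) - 1) / N - 1) * (K τ₂ * (C * M) * t ^ (N:ℝ))) := by
          apply mul_le_mul_of_nonneg_left _ hfac
          refine le_trans habs ?_
          exact mul_le_mul_of_nonneg_left hAd (Real.rpow_nonneg hmt.le _)
      _ = C₁ * M * t := by
          rw [hmexp, hC₁def]
          linear_combination (c₀ ^ (((N:ℝ) - 1) / N - 1) * (K τ₂ * (C * M)) / ((N:ℝ) - 1)) * tkey
  have key := intervalIntegral.norm_integral_le_abs_of_norm_le hae hb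
  have hval2 : |∫ t in (0:ℝ)..r₀, (C₁ * M) * t| = C₁ * M * (r₀ ^ 2 / 2) := by
    rw [intervalIntegral.integral_const_mul, integral_id,
      show C₁ * M * ((r₀ ^ 2 - 0 ^ 2) / 2) = C₁ * M * (r₀ ^ 2 / 2) by ring]
    exact abs_of_nonneg (mul_nonneg (mul_nonneg hC₁.le hM0) (by positivity))
  have hkey : M ≤ C₁ * M * (r₀ ^ 2 / 2) := by
    conv_lhs => rw [hMdef, hdiff, ← Real.norm_eq_abs]
    exact le_trans key (le_of_eq hval2)
  -- conclude
  have e0 : 0 ≤ C₁ * M := mul_nonneg hC₁.le hM0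
  have e1 : r₀ ^ 2 ≤ h := by nlinarith [hr₀.1, hr₀.2, hh4, hh0]
  have e2 : C₁ * M * (r₀ ^ 2 / 2) ≤ C₁ * M * (h / 2) := by
    apply mul_le_mul_of_nonneg_left _ e0
    linarith
  have e3 : C₁ * h ≤ 1 := by nlinarith [hh5, hh0]
  have e4 : C₁ * M * (h / 2) ≤ M / 2 := by
    have h1 : (C₁ * h) * (M / 2) ≤ 1 * (M / 2) :=
      mul_le_mul_of_nonneg_right e3 (by linarith)
    calc C₁ * M * (h / 2) = (C₁ * h) * (M / 2) := by ring
      _ ≤ 1 * (M / 2) := h1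
      _ = M / 2 := by ring
  linarith [hkey, e2, e4]
end

section
/- Contraction estimate: Under the assumptions above, let 0 < m ≤ f ≤ M on [u₀−h, u₀+h], let L be a Lipschitz constant of f on this interval, and K_* ≤ K ≤ K^* on [0,1/2] with K_* > 0. Then for any two continuous functions u₁, u₂ : [0,h] → [u₀−h, u₀+h], the operator (Gu)(r) = u₀ + ∫₀^r (t^{2−N}/(N−1)) (∫₀^t Nτ^{N−1}K(τ)f(u(τ))dτ)^{(N−1)/N} dt satisfies ‖Gu₁ − Gu₂‖_∞ ≤ (h²/(2N)) (K_* m)^{−1/N} K^* L ‖u₁ − u₂‖_∞. -/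
open Set Filter Topology intervalIntegral

lemma aux_mvt_rpow {α a b : ℝ} (hα0 : 0 < α) (hα1 : α ≤ 1) (hb : 0 < b) (hba : b ≤ a) :
    a ^ α - b ^ α ≤ α * b ^ (α - 1) * (a - b) := by
  rcases eq_or_lt_of_le hba with rfl | hlt
  · simp
  · have hcont : ContinuousOn (fun x : ℝ => x ^ α) (Icc b a) := by
      intro x hx
      exact (Real.continuousAt_rpow_const x α
        (Or.inl (ne_of_gt (lt_of_lt_of_le hb hx.1)))).continuousWithinAt
    have hderiv : ∀ x ∈ Ioo b a, HasDerivAt (fun x : ℝ => x ^ α) (α * x ^ (α - 1)) x := by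
      intro x hx
      have := Real.hasDerivAt_rpow_const (x := x) (p := α) (Or.inl (ne_of_gt (hb.trans hx.1)))
      simpa [mul_comm] using this
    obtain ⟨c, hc, hceq⟩ := exists_hasDerivAt_eq_slope (fun x : ℝ => x ^ α)
      (fun x => α * x ^ (α - 1)) hlt hcont hderiv
    have h1 : a ^ α - b ^ α = α * c ^ (α - 1) * (a - b) := by
      rw [hceq, div_mul_cancel₀]
      exact sub_ne_zero.mpr (ne_of_gt hlt)
    rw [h1]
    have hc1 : c ^ (α - 1) ≤ b ^ (α - 1) :=
      Real.rpow_le_rpow_of_nonpos hb hc.1.le (by linarith)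
    have h2 : 0 ≤ a - b := by linarith
    have := mul_le_mul_of_nonneg_left hc1 hα0.le
    exact mul_le_mul_of_nonneg_right this h2

lemma aux_abs_rpow_sub {α a b c : ℝ} (hα0 : 0 < α) (hα1 : α ≤ 1) (hc : 0 < c)
    (hca : c ≤ a) (hcb : c ≤ b) : |a ^ α - b ^ α| ≤ α * c ^ (α - 1) * |a - b| := by
  have key : ∀ x y : ℝ, c ≤ x → c ≤ y → y ≤ x →
      |x ^ α - y ^ α| ≤ α * c ^ (α - 1) * |x - y| := by
    intro x y hx hy hyx
    have h1 : y ^ α ≤ x ^ α := Real.rpow_le_rpow (by linarith) hyx hα0.le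
    rw [abs_of_nonneg (by linarith), abs_of_nonneg (by linarith)]
    calc x ^ α - y ^ α ≤ α * y ^ (α - 1) * (x - y) :=
          aux_mvt_rpow hα0 hα1 (lt_of_lt_of_le hc hy) hyx
      _ ≤ α * c ^ (α - 1) * (x - y) := by
          have : y ^ (α - 1) ≤ c ^ (α - 1) :=
            Real.rpow_le_rpow_of_nonpos hc hy (by linarith)
          exact mul_le_mul_of_nonneg_right (mul_le_mul_of_nonneg_left this hα0.le)
            (by linarith)
  rcases le_total b a with hba | hab
  · exact key a b hca hcb hba
  · have := key b a hcb hca hab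
    rwa [abs_sub_comm (b^α), abs_sub_comm b a] at this

/-- Contraction estimate:
‖Gu₁ − Gu₂‖_∞ ≤ (h²/(2N))·(K_* m)^{−1/N}·K^*·L·‖u₁ − u₂‖_∞. -/
theorem stmt_18 (N : ℕ) (hN : 2 ≤ N) (u₀ h : ℝ)
    (hh0 : 0 < h) (hh : h < 1 / 2) (hu₀h : 0 < u₀ - h)
    (K : ℝ → ℝ) (hKpos : ∀ τ ∈ Ico (0:ℝ) 1, 0 < K τ) (hKcont : ContinuousOn K (Ico 0 1))
    (f : ℝ → ℝ) (hfmono : MonotoneOn f (Ioi 0))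
    (m M L Kst Ksup : ℝ)
    (hm : m = f (u₀ - h)) (hmpos : 0 < m) (hM : M = f (u₀ + h))
    (hfL : 0 ≤ L ∧ ∀ x ∈ Icc (u₀ - h) (u₀ + h), ∀ y ∈ Icc (u₀ - h) (u₀ + h),
      |f x - f y| ≤ L * |x - y|)
    (hfbound : ∀ x ∈ Icc (u₀ - h) (u₀ + h), m ≤ f x ∧ f x ≤ M)
    (hKst : 0 < Kst) (hKbound : ∀ τ ∈ Icc (0:ℝ) (1/2), Kst ≤ K τ ∧ K τ ≤ Ksup)
    (u₁ u₂ : ℝ → ℝ)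
    (h₁cont : ContinuousOn u₁ (Icc 0 h)) (h₂cont : ContinuousOn u₂ (Icc 0 h))
    (h₁mem : ∀ r ∈ Icc (0:ℝ) h, u₁ r ∈ Icc (u₀ - h) (u₀ + h))
    (h₂mem : ∀ r ∈ Icc (0:ℝ) h, u₂ r ∈ Icc (u₀ - h) (u₀ + h))
    (Gop : (ℝ → ℝ) → ℝ → ℝ)
    (hGop : ∀ u r, Gop u r = u₀ + ∫ t in (0:ℝ)..r, t ^ ((2:ℝ) - N) / ((N:ℝ) - 1) *
      (∫ τ in (0:ℝ)..t, (N:ℝ) * τ ^ ((N:ℝ) - 1) * K τ * f (u τ)) ^ (((N:ℝ) - 1) / N)) :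
    sSup ((fun r => |Gop u₁ r - Gop u₂ r|) '' Icc 0 h) ≤
      h ^ 2 / (2 * N) * (Kst * m) ^ (-(1:ℝ) / N) * Ksup * L *
        sSup ((fun r => |u₁ r - u₂ r|) '' Icc 0 h) := by
  obtain ⟨hL, hLip⟩ := hfL
  have hn2 : (2:ℝ) ≤ (N:ℝ) := by exact_mod_cast hN
  have hn0 : (0:ℝ) < (N:ℝ) := by linarith
  have hn1 : (0:ℝ) < (N:ℝ) - 1 := by linarith
  set n : ℝ := (N:ℝ) with hn
  set α : ℝ := (n - 1) / n with hα
  have hα0 : 0 < α := div_pos hn1 hn0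
  have hα1 : α ≤ 1 := by
    rw [hα, div_le_one hn0]; linarith
  have hαm1 : α - 1 = -1 / n := by
    rw [hα]; field_simp; ring
  -- the sup norm D
  set D := sSup ((fun r => |u₁ r - u₂ r|) '' Icc 0 h) with hD
  have habs_cont : ContinuousOn (fun r => |u₁ r - u₂ r|) (Icc 0 h) := (h₁cont.sub h₂cont).abs
  have hbdd : BddAbove ((fun r => |u₁ r - u₂ r|) '' Icc 0 h) :=
    (isCompact_Icc.image_of_continuousOn habs_cont).bddAbove
  have hDle : ∀ τ ∈ Icc (0:ℝ) h, |u₁ τ - u₂ τ| ≤ D := fun τ hτ => le_csSup hbdd ⟨τ, hτ, rfl⟩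
  have hD0 : 0 ≤ D := le_trans (abs_nonneg _) (hDle 0 ⟨le_rfl, hh0.le⟩)
  -- subset facts
  have hsub1 : Icc (0:ℝ) h ⊆ Ico 0 1 := fun x hx => ⟨hx.1, by cases hx; linarith⟩
  have hsub2 : Icc (0:ℝ) h ⊆ Icc 0 (1/2) := fun x hx => ⟨hx.1, by cases hx; linarith⟩
  have hKc : ContinuousOn K (Icc 0 h) := hKcont.mono hsub1
  have hM0 : 0 < M := by
    have := hfbound (u₀ - h) ⟨le_rfl, by linarith⟩
    linarith
  have hKsup0 : 0 < Ksup := by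
    have := hKbound 0 ⟨le_rfl, by norm_num⟩
    linarith
  -- continuity of f on the interval
  have hfc : ContinuousOn f (Icc (u₀ - h) (u₀ + h)) := by
    have : LipschitzOnWith (Real.toNNReal L) f (Icc (u₀ - h) (u₀ + h)) := by
      apply LipschitzOnWith.of_dist_le_mul
      intro x hx y hy
      rw [Real.dist_eq, Real.dist_eq, Real.coe_toNNReal L hL]
      exact hLip x hx y hy
    exact this.continuousOn
  have hrpow_cont : Continuous (fun τ : ℝ => τ ^ (n - 1)) := by
    rw [continuous_iff_continuousAt]
    intro x
    exact Real.continuousAt_rpow_const x (n - 1) (Or.inr (by linarith))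
  -- generic facts about φ_u and F_u
  have hφcont : ∀ u : ℝ → ℝ, ContinuousOn u (Icc 0 h) →
      (∀ r ∈ Icc (0:ℝ) h, u r ∈ Icc (u₀ - h) (u₀ + h)) →
      ContinuousOn (fun τ => n * τ ^ (n - 1) * K τ * f (u τ)) (Icc 0 h) := by
    intro u hu humem
    exact (((continuous_const.mul hrpow_cont).continuousOn.mul hKc).mul
      (hfc.comp hu humem))
  have hφint : ∀ u : ℝ → ℝ, ContinuousOn (fun τ => n * τ ^ (n - 1) * K τ * f (u τ)) (Icc 0 h) →
      ∀ t ∈ Icc (0:ℝ) h, IntervalIntegrable (fun τ => n * τ ^ (n - 1) * K τ * f (u τ))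
        MeasureTheory.volume 0 t := by
    intro u hc t ht
    exact (hc.mono (Icc_subset_Icc le_rfl ht.2)).intervalIntegrable_of_Icc ht.1
  -- ∫₀ᵗ c * (n * τ^(n-1)) dτ = c * t^n
  have hint_pow : ∀ c : ℝ, ∀ t ∈ Icc (0:ℝ) h,
      (∫ τ in (0:ℝ)..t, c * (n * τ ^ (n - 1))) = c * t ^ n := by
    intro c t ht
    rw [intervalIntegral.integral_const_mul, intervalIntegral.integral_const_mul,
      integral_rpow (Or.inl (by linarith : (-1:ℝ) < n - 1))]
    rw [sub_add_cancel, Real.zero_rpow (ne_of_gt hn0)]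
    field_simp
    ring
  -- bounds on φ
  have hφlow : ∀ u : ℝ → ℝ, (∀ r ∈ Icc (0:ℝ) h, u r ∈ Icc (u₀ - h) (u₀ + h)) →
      ∀ τ ∈ Icc (0:ℝ) h, (Kst * m) * (n * τ ^ (n - 1)) ≤ n * τ ^ (n - 1) * K τ * f (u τ) ∧
        n * τ ^ (n - 1) * K τ * f (u τ) ≤ (Ksup * M) * (n * τ ^ (n - 1)) := by
    intro u humem τ hτ
    have hKτ := hKbound τ (hsub2 hτ)
    have hfτ := hfbound (u τ) (humem τ hτ)
    have hτp : 0 ≤ n * τ ^ (n - 1) :=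
      mul_nonneg hn0.le (Real.rpow_nonneg hτ.1 _)
    constructor
    · have h1 : Kst * m ≤ K τ * f (u τ) :=
        mul_le_mul hKτ.1 hfτ.1 hmpos.le (le_trans hKst.le hKτ.1)
      calc (Kst * m) * (n * τ ^ (n - 1)) ≤ (K τ * f (u τ)) * (n * τ ^ (n - 1)) :=
            mul_le_mul_of_nonneg_right h1 hτp
        _ = n * τ ^ (n - 1) * K τ * f (u τ) := by ring
    · have h1 : K τ * f (u τ) ≤ Ksup * M :=
        mul_le_mul hKτ.2 hfτ.2 (by linarith) hKsup0.le
      calc n * τ ^ (n - 1) * K τ * f (u τ) = (K τ * f (u τ)) * (n * τ ^ (n - 1)) := by ring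
        _ ≤ (Ksup * M) * (n * τ ^ (n - 1)) := mul_le_mul_of_nonneg_right h1 hτp
  -- bounds on F
  have hFbound : ∀ u : ℝ → ℝ, ContinuousOn u (Icc 0 h) →
      (∀ r ∈ Icc (0:ℝ) h, u r ∈ Icc (u₀ - h) (u₀ + h)) →
      ∀ t ∈ Icc (0:ℝ) h,
        Kst * m * t ^ n ≤ (∫ τ in (0:ℝ)..t, n * τ ^ (n - 1) * K τ * f (u τ)) ∧
        (∫ τ in (0:ℝ)..t, n * τ ^ (n - 1) * K τ * f (u τ)) ≤ Ksup * M * t ^ n := by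
    intro u hu humem t ht
    have hcn : ContinuousOn (fun τ => n * τ ^ (n - 1) * K τ * f (u τ)) (Icc 0 h) :=
      hφcont u hu humem
    have hint := hφint u hcn t ht
    have hint1 : IntervalIntegrable (fun τ => (Kst * m) * (n * τ ^ (n - 1)))
        MeasureTheory.volume 0 t :=
      ((continuous_const.mul (continuous_const.mul hrpow_cont)).intervalIntegrable _ _)
    have hint2 : IntervalIntegrable (fun τ => (Ksup * M) * (n * τ ^ (n - 1)))
        MeasureTheory.volume 0 t :=
      ((continuous_const.mul (continuous_const.mul hrpow_cont)).intervalIntegrable _ _)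
    constructor
    · rw [← hint_pow (Kst * m) t ht]
      apply intervalIntegral.integral_mono_on ht.1 hint1 hint
      intro τ hτ
      exact (hφlow u humem τ (Icc_subset_Icc le_rfl ht.2 hτ)).1
    · rw [← hint_pow (Ksup * M) t ht]
      apply intervalIntegral.integral_mono_on ht.1 hint hint2
      intro τ hτ
      exact (hφlow u humem τ (Icc_subset_Icc le_rfl ht.2 hτ)).2
  -- difference bound on F
  have hFdiff : ∀ t ∈ Icc (0:ℝ) h,
      |(∫ τ in (0:ℝ)..t, n * τ ^ (n - 1) * K τ * f (u₁ τ)) -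
        (∫ τ in (0:ℝ)..t, n * τ ^ (n - 1) * K τ * f (u₂ τ))| ≤ (Ksup * (L * D)) * t ^ n := by
    intro t ht
    have hint1 := hφint u₁ (hφcont u₁ h₁cont h₁mem) t ht
    have hint2 := hφint u₂ (hφcont u₂ h₂cont h₂mem) t ht
    rw [← intervalIntegral.integral_sub hint1 hint2]
    have hb : IntervalIntegrable (fun τ => (Ksup * (L * D)) * (n * τ ^ (n - 1)))
        MeasureTheory.volume 0 t := (continuous_const.mul (continuous_const.mul hrpow_cont)).intervalIntegrable _ _
    have key := intervalIntegral.norm_integral_le_abs_of_norm_le (μ := MeasureTheory.volume)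
      (a := (0:ℝ)) (b := t)
      (f := fun τ => n * τ ^ (n - 1) * K τ * f (u₁ τ) - n * τ ^ (n - 1) * K τ * f (u₂ τ))
      ?_ hb
    · rw [Real.norm_eq_abs] at key
      refine le_trans key ?_
      rw [hint_pow (Ksup * (L * D)) t ht, abs_of_nonneg
        (mul_nonneg (mul_nonneg hKsup0.le (mul_nonneg hL hD0)) (Real.rpow_nonneg ht.1 _))]
    · filter_upwards [MeasureTheory.ae_restrict_mem measurableSet_uIoc] with τ hτ
      rw [uIoc_of_le ht.1] at hτ
      have hτh : τ ∈ Icc (0:ℝ) h := ⟨hτ.1.le, le_trans hτ.2 ht.2⟩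
      have hKτ := hKbound τ (hsub2 hτh)
      have hτp : (0:ℝ) ≤ n * τ ^ (n - 1) := mul_nonneg hn0.le (Real.rpow_nonneg hτh.1 _)
      have hfd : |f (u₁ τ) - f (u₂ τ)| ≤ L * D := by
        calc |f (u₁ τ) - f (u₂ τ)| ≤ L * |u₁ τ - u₂ τ| :=
              hLip _ (h₁mem τ hτh) _ (h₂mem τ hτh)
          _ ≤ L * D := mul_le_mul_of_nonneg_left (hDle τ hτh) hL
      have heq : n * τ ^ (n - 1) * K τ * f (u₁ τ) - n * τ ^ (n - 1) * K τ * f (u₂ τ)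
          = (n * τ ^ (n - 1) * K τ) * (f (u₁ τ) - f (u₂ τ)) := by ring
      rw [Real.norm_eq_abs, heq, abs_mul]
      have hKτ0 : 0 ≤ K τ := le_trans hKst.le hKτ.1
      have h1 : |n * τ ^ (n - 1) * K τ| ≤ n * τ ^ (n - 1) * Ksup := by
        rw [abs_of_nonneg (mul_nonneg hτp hKτ0)]
        exact mul_le_mul_of_nonneg_left hKτ.2 hτp
      calc |n * τ ^ (n - 1) * K τ| * |f (u₁ τ) - f (u₂ τ)|
          ≤ (n * τ ^ (n - 1) * Ksup) * (L * D) := by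
            apply mul_le_mul h1 hfd (abs_nonneg _)
            positivity
        _ = Ksup * (L * D) * (n * τ ^ (n - 1)) := by ring
  -- continuity of the primitive F
  have hFcont : ∀ u : ℝ → ℝ, ContinuousOn u (Icc 0 h) →
      (∀ r ∈ Icc (0:ℝ) h, u r ∈ Icc (u₀ - h) (u₀ + h)) →
      ContinuousOn (fun t => ∫ τ in (0:ℝ)..t, n * τ ^ (n - 1) * K τ * f (u τ)) (Icc 0 h) := by
    intro u hu humem
    have hint : IntervalIntegrable (fun τ => n * τ ^ (n - 1) * K τ * f (u τ))
        MeasureTheory.volume 0 h := hφint u (hφcont u hu humem) h ⟨hh0.le, le_rfl⟩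
    have h0mem : (0:ℝ) ∈ uIcc (0:ℝ) h := by
      rw [uIcc_of_le hh0.le]; exact ⟨le_rfl, hh0.le⟩
    have := intervalIntegral.continuousOn_primitive_interval' hint h0mem
    rwa [uIcc_of_le hh0.le] at this
  -- integrability of g
  have hgint : ∀ u : ℝ → ℝ, ContinuousOn u (Icc 0 h) →
      (∀ r ∈ Icc (0:ℝ) h, u r ∈ Icc (u₀ - h) (u₀ + h)) →
      IntervalIntegrable (fun t => t ^ (2 - n) / (n - 1) *
        (∫ τ in (0:ℝ)..t, n * τ ^ (n - 1) * K τ * f (u τ)) ^ α)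
        MeasureTheory.volume 0 h := by
    intro u hu humem
    have hgcont : ContinuousOn (fun t => t ^ (2 - n) / (n - 1) *
        (∫ τ in (0:ℝ)..t, n * τ ^ (n - 1) * K τ * f (u τ)) ^ α) (Ioc 0 h) := by
      apply ContinuousOn.mul
      · intro t ht
        exact ((Real.continuousAt_rpow_const t _ (Or.inl (ne_of_gt ht.1))).div_const
          _).continuousWithinAt
      · exact ((hFcont u hu humem).mono Ioc_subset_Icc_self).rpow_const
          (fun x _ => Or.inr hα0.le)
    rw [intervalIntegrable_iff_integrableOn_Ioc_of_le hh0.le]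
    apply MeasureTheory.Integrable.mono'
      (g := fun _ => (Ksup * M) ^ α * h / (n - 1))
      (MeasureTheory.integrable_const _)
      (hgcont.aestronglyMeasurable measurableSet_Ioc)
    filter_upwards [MeasureTheory.ae_restrict_mem measurableSet_Ioc] with t ht
    have htIcc : t ∈ Icc (0:ℝ) h := Ioc_subset_Icc_self ht
    have hFt := hFbound u hu humem t htIcc
    have hF0 : 0 ≤ ∫ τ in (0:ℝ)..t, n * τ ^ (n - 1) * K τ * f (u τ) := by
      refine le_trans ?_ hFt.1
      have := Real.rpow_nonneg htIcc.1 n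
      positivity
    have hnα : n * α = n - 1 := by
      rw [hα]; field_simp
    have h1 : (∫ τ in (0:ℝ)..t, n * τ ^ (n - 1) * K τ * f (u τ)) ^ α
        ≤ (Ksup * M) ^ α * t ^ (n - 1) := by
      calc (∫ τ in (0:ℝ)..t, n * τ ^ (n - 1) * K τ * f (u τ)) ^ α
          ≤ (Ksup * M * t ^ n) ^ α := Real.rpow_le_rpow hF0 hFt.2 hα0.le
        _ = (Ksup * M) ^ α * (t ^ n) ^ α :=
            Real.mul_rpow (by positivity) (Real.rpow_nonneg htIcc.1 _)
        _ = (Ksup * M) ^ α * t ^ (n - 1) := by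
            rw [← Real.rpow_mul htIcc.1, hnα]
    have hpow2 : t ^ (2 - n) * t ^ (n - 1) = t := by
      rw [← Real.rpow_add ht.1, show (2 - n) + (n - 1) = (1:ℝ) by ring, Real.rpow_one]
    have htp : 0 ≤ t ^ (2 - n) := Real.rpow_nonneg htIcc.1 _
    rw [Real.norm_eq_abs, abs_of_nonneg (mul_nonneg (div_nonneg htp hn1.le)
      (Real.rpow_nonneg hF0 _))]
    calc t ^ (2 - n) / (n - 1) *
          (∫ τ in (0:ℝ)..t, n * τ ^ (n - 1) * K τ * f (u τ)) ^ α
        ≤ t ^ (2 - n) / (n - 1) * ((Ksup * M) ^ α * t ^ (n - 1)) :=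
          mul_le_mul_of_nonneg_left h1 (div_nonneg htp hn1.le)
      _ = (Ksup * M) ^ α * (t ^ (2 - n) * t ^ (n - 1)) / (n - 1) := by ring
      _ = (Ksup * M) ^ α * t / (n - 1) := by rw [hpow2]
      _ ≤ (Ksup * M) ^ α * h / (n - 1) := by
          have h2 : (0:ℝ) ≤ (Ksup * M) ^ α := Real.rpow_nonneg (by positivity) _
          gcongr
          exact htIcc.2
  -- the contraction constant
  set C : ℝ := (Kst * m) ^ (α - 1) * Ksup * L * D / n with hCdef
  have hC0 : 0 ≤ C := by
    rw [hCdef]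
    have := Real.rpow_nonneg (mul_nonneg hKst.le hmpos.le) (α - 1)
    positivity
  -- pointwise bound on the difference of the integrands
  have hgd : ∀ t ∈ Ioc (0:ℝ) h,
      |t ^ (2 - n) / (n - 1) * (∫ τ in (0:ℝ)..t, n * τ ^ (n - 1) * K τ * f (u₁ τ)) ^ α -
        t ^ (2 - n) / (n - 1) * (∫ τ in (0:ℝ)..t, n * τ ^ (n - 1) * K τ * f (u₂ τ)) ^ α|
        ≤ C * t := by
    intro t ht
    have htIcc : t ∈ Icc (0:ℝ) h := Ioc_subset_Icc_self ht
    have htn : 0 < t ^ n := Real.rpow_pos_of_pos ht.1 n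
    have hc : 0 < Kst * m * t ^ n := by positivity
    have hca := (hFbound u₁ h₁cont h₁mem t htIcc).1
    have hcb := (hFbound u₂ h₂cont h₂mem t htIcc).1
    have key := aux_abs_rpow_sub hα0 hα1 hc hca hcb
    have key2 : |(∫ τ in (0:ℝ)..t, n * τ ^ (n - 1) * K τ * f (u₁ τ)) ^ α -
        (∫ τ in (0:ℝ)..t, n * τ ^ (n - 1) * K τ * f (u₂ τ)) ^ α|
        ≤ α * (Kst * m * t ^ n) ^ (α - 1) * (Ksup * (L * D) * t ^ n) := by
      refine le_trans key ?_
      exact mul_le_mul_of_nonneg_left (hFdiff t htIcc)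
        (mul_nonneg hα0.le (Real.rpow_nonneg hc.le _))
    have hsplit : (Kst * m * t ^ n) ^ (α - 1) = (Kst * m) ^ (α - 1) * t ^ (-1:ℝ) := by
      rw [Real.mul_rpow (by positivity) htn.le, ← Real.rpow_mul ht.1.le,
        show n * (α - 1) = (-1:ℝ) by rw [hα]; field_simp; ring]
    have hprod : t ^ (2 - n) * t ^ (-1:ℝ) * t ^ n = t := by
      rw [← Real.rpow_add ht.1, ← Real.rpow_add ht.1,
        show (2 - n) + (-1) + n = (1:ℝ) by ring, Real.rpow_one]
    have hfac : t ^ (2 - n) / (n - 1) * (∫ τ in (0:ℝ)..t, n * τ ^ (n - 1) * K τ * f (u₁ τ)) ^ α -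
        t ^ (2 - n) / (n - 1) * (∫ τ in (0:ℝ)..t, n * τ ^ (n - 1) * K τ * f (u₂ τ)) ^ α
        = t ^ (2 - n) / (n - 1) *
          ((∫ τ in (0:ℝ)..t, n * τ ^ (n - 1) * K τ * f (u₁ τ)) ^ α -
           (∫ τ in (0:ℝ)..t, n * τ ^ (n - 1) * K τ * f (u₂ τ)) ^ α) := by ring
    have htp : 0 ≤ t ^ (2 - n) / (n - 1) :=
      div_nonneg (Real.rpow_nonneg ht.1.le _) hn1.le
    rw [hfac, abs_mul, abs_of_nonneg htp]
    calc t ^ (2 - n) / (n - 1) *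
          |(∫ τ in (0:ℝ)..t, n * τ ^ (n - 1) * K τ * f (u₁ τ)) ^ α -
           (∫ τ in (0:ℝ)..t, n * τ ^ (n - 1) * K τ * f (u₂ τ)) ^ α|
        ≤ t ^ (2 - n) / (n - 1) *
          (α * (Kst * m * t ^ n) ^ (α - 1) * (Ksup * (L * D) * t ^ n)) :=
          mul_le_mul_of_nonneg_left key2 htp
      _ = C * t := by
          rw [hsplit, hCdef]
          have h4 : t ^ (2 - n) / (n - 1) *
              (α * ((Kst * m) ^ (α - 1) * t ^ (-1:ℝ)) * (Ksup * (L * D) * t ^ n))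
              = α * (Kst * m) ^ (α - 1) * Ksup * L * D / (n - 1) *
                (t ^ (2 - n) * t ^ (-1:ℝ) * t ^ n) := by ring
          rw [h4, hprod, hα]
          field_simp
  -- main pointwise bound on Gop differences
  have hmain : ∀ r ∈ Icc (0:ℝ) h, |Gop u₁ r - Gop u₂ r| ≤ C * (h ^ 2 / 2) := by
    intro r hr
    have hG1 := hGop u₁ r
    have hG2 := hGop u₂ r
    rw [hG1, hG2, add_sub_add_left_eq_sub]
    have hsubI : uIcc (0:ℝ) r ⊆ uIcc (0:ℝ) h := by
      rw [uIcc_of_le hr.1, uIcc_of_le hh0.le]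
      exact Icc_subset_Icc le_rfl hr.2
    have int1 := (hgint u₁ h₁cont h₁mem).mono_set hsubI
    have int2 := (hgint u₂ h₂cont h₂mem).mono_set hsubI
    rw [← intervalIntegral.integral_sub int1 int2]
    have hbint : IntervalIntegrable (fun t => C * t) MeasureTheory.volume 0 r :=
      (continuous_const.mul continuous_id).intervalIntegrable _ _
    have key := intervalIntegral.norm_integral_le_abs_of_norm_le (μ := MeasureTheory.volume)
      (a := (0:ℝ)) (b := r)
      (f := fun t => t ^ (2 - n) / (n - 1) *
          (∫ τ in (0:ℝ)..t, n * τ ^ (n - 1) * K τ * f (u₁ τ)) ^ α -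
        t ^ (2 - n) / (n - 1) *
          (∫ τ in (0:ℝ)..t, n * τ ^ (n - 1) * K τ * f (u₂ τ)) ^ α)
      ?_ hbint
    · rw [Real.norm_eq_abs] at key
      refine le_trans key ?_
      rw [intervalIntegral.integral_const_mul, integral_id]
      have h5 : |C * ((r ^ 2 - 0 ^ 2) / 2)| = C * (r ^ 2 / 2) := by
        rw [abs_of_nonneg]
        · norm_num
        · have : (0:ℝ) ≤ r ^ 2 := sq_nonneg r
          norm_num
          positivity
      rw [h5]
      have : r ^ 2 ≤ h ^ 2 := pow_le_pow_left₀ hr.1 hr.2 2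
      have := mul_le_mul_of_nonneg_left (by linarith : r ^ 2 / 2 ≤ h ^ 2 / 2) hC0
      linarith
    · filter_upwards [MeasureTheory.ae_restrict_mem measurableSet_uIoc] with t htm
      rw [uIoc_of_le hr.1] at htm
      have : t ∈ Ioc (0:ℝ) h := ⟨htm.1, le_trans htm.2 hr.2⟩
      rw [Real.norm_eq_abs]
      exact hgd t this
  -- conclude
  rw [← hαm1]
  have hne : ((fun r => |Gop u₁ r - Gop u₂ r|) '' Icc 0 h).Nonempty :=
    (nonempty_Icc.mpr hh0.le).image _
  apply csSup_le hne
  rintro x ⟨r, hr, rfl⟩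
  refine le_trans (hmain r hr) ?_
  rw [hCdef]
  ring_nf
  rfl
end
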